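/- arXiv:2201.06479 — 7 statements merged into one kernel-verified Lean document; each statement's English description precedes it below -/
import Mathlib

section
/- For every X = (X₁, X₂) ∈ ℝ², the matrix S_n(X) := D²Φ_n(X) · M(X) is symmetric, where Φ_n(X) = Σ_{j=0}^n a_{j,n} X₁^j X₂^{n−j} with coefficients defined by a_{0,n}=1 and the recursion a_{j+1,n} = ((n−j)(a·j+c·(n−j−1)))/((j+1)(b·j+d·(n−j−1))) · a_{j,n}, and M(X) is the 2×2 matrix with rows (a·X₁, b·X₁) and (c·X₂, d·X₂). -/
/-- The coefficient `a_{j,n}` of the polynomial `Φ_n`. -/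
noncomputable def ajn (a b c d : ℝ) (n j : ℕ) : ℝ :=
  (n.choose j : ℝ) * ∏ k ∈ Finset.range j,
    (a * k + c * ((n : ℝ) - k - 1)) / (b * k + d * ((n : ℝ) - k - 1))

/-- The polynomial `Φ_n`. -/
noncomputable def Phi (a b c d : ℝ) (n : ℕ) (x y : ℝ) : ℝ :=
  ∑ j ∈ Finset.range (n + 1), ajn a b c d n j * x ^ j * y ^ (n - j)


/-- Partial derivative with respect to the first variable. -/
noncomputable def pd1 (f : ℝ → ℝ → ℝ) (x y : ℝ) : ℝ := deriv (fun t => f t y) x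

/-- Partial derivative with respect to the second variable. -/
noncomputable def pd2 (f : ℝ → ℝ → ℝ) (x y : ℝ) : ℝ := deriv (fun t => f x t) y

/-- The Hessian matrix of a function of two real variables. -/
noncomputable def Hess (f : ℝ → ℝ → ℝ) (x y : ℝ) : Matrix (Fin 2) (Fin 2) ℝ :=
  !![pd1 (pd1 f) x y, pd1 (pd2 f) x y; pd2 (pd1 f) x y, pd2 (pd2 f) x y]

/-- The mobility matrix `M(X)`. -/
noncomputable def Mmat (a b c d x y : ℝ) : Matrix (Fin 2) (Fin 2) ℝ :=
  !![a * x, b * x; c * y, d * y]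

lemma deriv_mul_pow_mul (c1 c2 : ℝ) (j : ℕ) (x : ℝ) :
    deriv (fun t : ℝ => c1 * t ^ j * c2) x = c1 * ((j:ℝ) * x ^ (j-1)) * c2 := by
  have h : (fun t : ℝ => c1 * t ^ j * c2) = fun t => (c1 * c2) * t ^ j := by
    funext t; ring
  rw [h, deriv_const_mul_field, deriv_pow_field]; ring

lemma mul_pow_pred (m : ℕ) (x : ℝ) : (m:ℝ) * x ^ (m-1) * x = (m:ℝ) * x ^ m := by
  cases m with
  | zero => simp
  | succ k => push_cast; rw [pow_succ]; ring

lemma pd1_Phi (a b c d : ℝ) (n : ℕ) (x y : ℝ) :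
    pd1 (Phi a b c d n) x y =
      ∑ j ∈ Finset.range (n+1), ajn a b c d n j * ((j:ℝ) * x ^ (j-1)) * y ^ (n-j) := by
  unfold pd1 Phi
  rw [deriv_fun_sum (fun j _ => by fun_prop)]
  exact Finset.sum_congr rfl fun j _ => deriv_mul_pow_mul _ _ _ _

lemma pd2_Phi (a b c d : ℝ) (n : ℕ) (x y : ℝ) :
    pd2 (Phi a b c d n) x y =
      ∑ j ∈ Finset.range (n+1), ajn a b c d n j * x ^ j * (((n-j:ℕ):ℝ) * y ^ (n-j-1)) := by
  unfold pd2 Phi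
  rw [deriv_fun_sum (fun j _ => by fun_prop)]
  refine Finset.sum_congr rfl fun j _ => ?_
  have h : (fun t : ℝ => ajn a b c d n j * x ^ j * t ^ (n-j))
      = fun t => (ajn a b c d n j * x ^ j) * t ^ (n-j) * 1 := by funext t; ring
  rw [h, deriv_mul_pow_mul]; ring

lemma pd1_pd1_Phi (a b c d : ℝ) (n : ℕ) (x y : ℝ) :
    pd1 (pd1 (Phi a b c d n)) x y =
      ∑ j ∈ Finset.range (n+1),
        (ajn a b c d n j * (j:ℝ)) * (((j-1:ℕ):ℝ) * x ^ (j-1-1)) * y ^ (n-j) := by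
  show deriv (fun t => pd1 (Phi a b c d n) t y) x = _
  simp_rw [pd1_Phi]
  rw [deriv_fun_sum (fun j _ => by fun_prop)]
  refine Finset.sum_congr rfl fun j _ => ?_
  have h : (fun t : ℝ => ajn a b c d n j * ((j:ℝ) * t ^ (j-1)) * y ^ (n-j))
      = fun t => (ajn a b c d n j * (j:ℝ)) * t ^ (j-1) * y ^ (n-j) := by funext t; ring
  rw [h, deriv_mul_pow_mul]

lemma pd2_pd1_Phi (a b c d : ℝ) (n : ℕ) (x y : ℝ) :
    pd2 (pd1 (Phi a b c d n)) x y =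
      ∑ j ∈ Finset.range (n+1),
        ajn a b c d n j * ((j:ℝ) * x ^ (j-1)) * (((n-j:ℕ):ℝ) * y ^ (n-j-1)) := by
  show deriv (fun t => pd1 (Phi a b c d n) x t) y = _
  simp_rw [pd1_Phi]
  rw [deriv_fun_sum (fun j _ => by fun_prop)]
  refine Finset.sum_congr rfl fun j _ => ?_
  have h : (fun t : ℝ => ajn a b c d n j * ((j:ℝ) * x ^ (j-1)) * t ^ (n-j))
      = fun t => (ajn a b c d n j * ((j:ℝ) * x ^ (j-1))) * t ^ (n-j) * 1 := by funext t; ring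
  rw [h, deriv_mul_pow_mul]; ring

lemma pd1_pd2_Phi (a b c d : ℝ) (n : ℕ) (x y : ℝ) :
    pd1 (pd2 (Phi a b c d n)) x y =
      ∑ j ∈ Finset.range (n+1),
        ajn a b c d n j * ((j:ℝ) * x ^ (j-1)) * (((n-j:ℕ):ℝ) * y ^ (n-j-1)) := by
  show deriv (fun t => pd2 (Phi a b c d n) t y) x = _
  simp_rw [pd2_Phi]
  rw [deriv_fun_sum (fun j _ => by fun_prop)]
  refine Finset.sum_congr rfl fun j _ => ?_
  have h : (fun t : ℝ => ajn a b c d n j * t ^ j * (((n-j:ℕ):ℝ) * y ^ (n-j-1)))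
      = fun t => ajn a b c d n j * t ^ j * (((n-j:ℕ):ℝ) * y ^ (n-j-1)) := rfl
  rw [h, deriv_mul_pow_mul]

lemma pd2_pd2_Phi (a b c d : ℝ) (n : ℕ) (x y : ℝ) :
    pd2 (pd2 (Phi a b c d n)) x y =
      ∑ j ∈ Finset.range (n+1),
        ajn a b c d n j * x ^ j * (((n-j:ℕ):ℝ) * (((n-j-1:ℕ):ℝ) * y ^ (n-j-1-1))) := by
  show deriv (fun t => pd2 (Phi a b c d n) x t) y = _
  simp_rw [pd2_Phi]
  rw [deriv_fun_sum (fun j _ => by fun_prop)]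
  refine Finset.sum_congr rfl fun j _ => ?_
  have h : (fun t : ℝ => ajn a b c d n j * x ^ j * (((n-j:ℕ):ℝ) * t ^ (n-j-1)))
      = fun t => (ajn a b c d n j * x ^ j * ((n-j:ℕ):ℝ)) * t ^ (n-j-1) * 1 := by funext t; ring
  rw [h, deriv_mul_pow_mul]; ring

lemma key_rec (a b c d : ℝ) (hb : 0 < b) (hd : 0 < d) (n j : ℕ) (hn : 2 ≤ n) (hj : j + 1 ≤ n) :
    ajn a b c d n (j+1) * ((j:ℝ)+1) * (b*(j:ℝ) + d*((n:ℝ)-(j:ℝ)-1)) =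
    ajn a b c d n j * ((n:ℝ) - (j:ℝ)) * (a*(j:ℝ) + c*((n:ℝ)-(j:ℝ)-1)) := by
  have hD : b*(j:ℝ) + d*((n:ℝ)-(j:ℝ)-1) ≠ 0 := by
    have h1 : (j:ℝ) + 1 ≤ (n:ℝ) := by exact_mod_cast hj
    rcases Nat.eq_zero_or_pos j with h | h
    · subst h
      have h2 : (2:ℝ) ≤ (n:ℝ) := by exact_mod_cast hn
      push_cast; nlinarith
    · have : (1:ℝ) ≤ (j:ℝ) := by exact_mod_cast h
      nlinarith
  have hch : ((n.choose (j+1)):ℝ) * ((j:ℝ)+1) = ((n.choose j):ℝ) * ((n:ℝ) - (j:ℝ)) := by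
    have h0 := Nat.choose_succ_right_eq n j
    have hjn : j ≤ n := by omega
    have : ((n.choose (j+1) * (j+1) : ℕ) : ℝ) = ((n.choose j * (n - j) : ℕ) : ℝ) := by
      exact_mod_cast congrArg (Nat.cast (R := ℝ)) h0
    push_cast [Nat.cast_sub hjn] at this
    linarith [this]
  unfold ajn
  rw [Finset.prod_range_succ]
  set P := ∏ k ∈ Finset.range j, (a * (k:ℝ) + c * ((n:ℝ) - k - 1)) / (b * k + d * ((n:ℝ) - k - 1)) with hP
  have : (↑(n.choose (j+1)) : ℝ) * (P * ((a * ↑j + c * (↑n - ↑j - 1)) / (b * ↑j + d * (↑n - ↑j - 1)))) * (↑j + 1) * (b * ↑j + d * (↑n - ↑j - 1))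
      = (↑(n.choose (j+1)) * (↑j + 1)) * P * ((a * ↑j + c * (↑n - ↑j - 1)) / (b * ↑j + d * (↑n - ↑j - 1)) * (b * ↑j + d * (↑n - ↑j - 1))) := by ring
  rw [this, div_mul_cancel₀ _ hD, hch]; ring

lemma core_id (a b c d : ℝ) (ha : 0 < a) (hb : 0 < b) (hc : 0 < c) (hd : 0 < d)
    (n : ℕ) (hn : 2 ≤ n) (x y : ℝ) :
    pd1 (pd1 (Phi a b c d n)) x y * (b*x) + pd1 (pd2 (Phi a b c d n)) x y * (d*y)
      = pd2 (pd1 (Phi a b c d n)) x y * (a*x) + pd2 (pd2 (Phi a b c d n)) x y * (c*y) := by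
  rw [pd1_pd1_Phi, pd1_pd2_Phi, pd2_pd1_Phi, pd2_pd2_Phi]
  rw [Finset.sum_mul, Finset.sum_mul, Finset.sum_mul, Finset.sum_mul,
    ← Finset.sum_add_distrib, ← Finset.sum_add_distrib]
  rw [Finset.sum_range_succ' _ n, Finset.sum_range_succ _ n]
  have h0 : (ajn a b c d n 0 * ((0:ℕ):ℝ)) * (((0-1:ℕ):ℝ) * x ^ (0-1-1)) * y ^ (n-0) * (b*x)
      + ajn a b c d n 0 * (((0:ℕ):ℝ) * x ^ (0-1)) * (((n-0:ℕ):ℝ) * y ^ (n-0-1)) * (d*y) = 0 := by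
    simp
  have hN : ajn a b c d n n * (((n:ℕ):ℝ) * x ^ (n-1)) * (((n-n:ℕ):ℝ) * y ^ (n-n-1)) * (a*x)
      + ajn a b c d n n * x ^ n * (((n-n:ℕ):ℝ) * (((n-n-1:ℕ):ℝ) * y ^ (n-n-1-1))) * (c*y) = 0 := by
    simp
  rw [h0, hN, add_zero, add_zero]
  refine Finset.sum_congr rfl fun j hj => ?_
  have hjn : j + 1 ≤ n := Finset.mem_range.mp hj
  have hkey := key_rec a b c d hb hd n j hn hjn
  have e1 : n - j - 1 = n - (j+1) := by omega
  have e2 : n - j - 1 - 1 = n - (j+1) - 1 := by omega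
  have e3 : (j+1) - 1 = j := by omega
  have hc1 : ((n-j:ℕ):ℝ) = (n:ℝ) - j := by
    rw [Nat.cast_sub (by omega)]
  have hc2 : ((n-(j+1):ℕ):ℝ) = (n:ℝ) - j - 1 := by
    rw [Nat.cast_sub hjn]; push_cast; ring
  have hx : (j:ℝ) * x^(j-1) * x = (j:ℝ) * x^j := mul_pow_pred j x
  have hy : ((n:ℝ)-(j:ℝ)-1) * y^(n-(j+1)-1) * y = ((n:ℝ)-(j:ℝ)-1) * y^(n-(j+1)) := by
    have := mul_pow_pred (n-(j+1)) y
    rw [hc2] at this; exact this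
  simp only [e1, e2, e3, hc1, hc2]
  push_cast
  linear_combination (x^j * y^(n-(j+1))) * hkey
    + (ajn a b c d n (j+1) * ((j:ℝ)+1) * b * y^(n-(j+1))) * hx
    - (ajn a b c d n j * ((n:ℝ)-(j:ℝ)) * a * y^(n-(j+1))) * hx
    + (ajn a b c d n (j+1) * ((j:ℝ)+1) * d * x^j) * hy
    - (ajn a b c d n j * ((n:ℝ)-(j:ℝ)) * c * x^j) * hy


/-- The matrix `S_n(X) = D²Φ_n(X) · M(X)` is symmetric. -/
theorem Sn_symm (a b c d : ℝ) (ha : 0 < a) (hb : 0 < b) (hc : 0 < c) (hd : 0 < d)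
    (habcd : b * c < a * d) (n : ℕ) (hn : 2 ≤ n) (x y : ℝ) :
    (Hess (Phi a b c d n) x y * Mmat a b c d x y).IsSymm := by
  have hcore := core_id a b c d ha hb hc hd n hn x y
  have hmix : pd1 (pd2 (Phi a b c d n)) x y = pd2 (pd1 (Phi a b c d n)) x y := by
    rw [pd1_pd2_Phi, pd2_pd1_Phi]
  rw [Matrix.IsSymm]
  ext i k
  fin_cases i <;> fin_cases k <;>
    simp [Matrix.mul_apply, Fin.sum_univ_two, Hess, Mmat, Matrix.transpose_apply] <;>
    linarith [hcore, hmix]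
end

section
/- With A_{j,k} := (j+2)(n−k)·a_{j+2,n}·a_{k,n} − (n−j−1)(k+1)·a_{j+1,n}·a_{k+1,n} for 0 ≤ j,k ≤ n−2, one has the closed-form A_{j,k} = (a·d−b·c)·(n−1)(n−k)(n−j−1)(j+1−k)/(α_{j+1,n}·α_{k,n}) · a_{j+1,n}·a_{k,n}, where α_{k,n} := b·k + d·(n−k−1). -/
/-- The coefficient `A_{j,k}`. -/
noncomputable def Ajk (a b c d : ℝ) (n j k : ℕ) : ℝ :=
  ((j : ℝ) + 2) * ((n : ℝ) - k) * ajn a b c d n (j + 2) * ajn a b c d n k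
    - ((n : ℝ) - j - 1) * ((k : ℝ) + 1) * ajn a b c d n (j + 1) * ajn a b c d n (k + 1)

lemma ajn_succ (a b c d : ℝ) (n i : ℕ) (hi : i < n) :
    ajn a b c d n (i + 1) =
      (((n : ℝ) - i) / ((i : ℝ) + 1)) *
        ((a * i + c * ((n : ℝ) - i - 1)) / (b * i + d * ((n : ℝ) - i - 1))) *
        ajn a b c d n i := by
  unfold ajn
  rw [Finset.prod_range_succ]
  have h2 : (n.choose (i + 1) : ℝ) * ((i : ℝ) + 1) = (n.choose i : ℝ) * ((n : ℝ) - i) := by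
    have := congrArg (Nat.cast : ℕ → ℝ) (Nat.choose_succ_right_eq n i)
    push_cast [Nat.cast_sub hi.le] at this
    linarith [this]
  have hne : ((i : ℝ) + 1) ≠ 0 := by positivity
  have hc : (n.choose (i + 1) : ℝ) = ((n : ℝ) - i) / ((i : ℝ) + 1) * (n.choose i : ℝ) := by
    rw [div_mul_eq_mul_div, eq_div_iff hne]
    linarith [h2]
  rw [hc]
  ring

/-- Closed form formula for the coefficients `A_{j,k}`. -/
theorem Ajk_closed_form (a b c d : ℝ) (ha : 0 < a) (hb : 0 < b) (hc : 0 < c) (hd : 0 < d)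
    (n : ℕ) (hn : 2 ≤ n) (j k : ℕ) (hj : j ≤ n - 2) (hk : k ≤ n - 2) :
    Ajk a b c d n j k =
      (a * d - b * c) * ((n : ℝ) - 1) * ((n : ℝ) - k) * ((n : ℝ) - j - 1) *
        ((j : ℝ) + 1 - k) /
        ((b * ((j : ℝ) + 1) + d * ((n : ℝ) - (j + 1) - 1)) *
          (b * k + d * ((n : ℝ) - k - 1))) *
        ajn a b c d n (j + 1) * ajn a b c d n k := by
  have hcast : ((n - 2 : ℕ) : ℝ) = (n : ℝ) - 2 := by
    rw [Nat.cast_sub hn]; norm_num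
  have hj' : (j : ℝ) ≤ (n : ℝ) - 2 := by
    have := Nat.cast_le (α := ℝ) |>.2 hj; rw [hcast] at this; exact this
  have hk' : (k : ℝ) ≤ (n : ℝ) - 2 := by
    have := Nat.cast_le (α := ℝ) |>.2 hk; rw [hcast] at this; exact this
  have hjn : j + 1 < n := by omega
  have hkn : k < n := by omega
  have e1 := ajn_succ a b c d n (j + 1) hjn
  have e2 := ajn_succ a b c d n k hkn
  have hα1 : b * ((j : ℝ) + 1) + d * ((n : ℝ) - (j + 1) - 1) ≠ 0 := by
    have : (0:ℝ) ≤ (n : ℝ) - (j + 1) - 1 := by linarith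
    positivity
  have hα2 : b * (k : ℝ) + d * ((n : ℝ) - k - 1) ≠ 0 := by
    rcases Nat.eq_zero_or_pos k with hk0 | hk0
    · subst hk0
      have : (0:ℝ) < (n : ℝ) - 0 - 1 := by push_cast; linarith
      push_cast
      nlinarith
    · have h1 : (0:ℝ) < (k : ℝ) := by exact_mod_cast hk0
      have : (0:ℝ) ≤ (n : ℝ) - k - 1 := by linarith
      nlinarith
  have hne1 : ((j : ℝ) + 1) + 1 ≠ 0 := by positivity
  have hne2 : ((k : ℝ) + 1) ≠ 0 := by positivity
  show ((j : ℝ) + 2) * ((n : ℝ) - k) * ajn a b c d n (j + 2) * ajn a b c d n k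
    - ((n : ℝ) - j - 1) * ((k : ℝ) + 1) * ajn a b c d n (j + 1) * ajn a b c d n (k + 1) = _
  have ej2 : ajn a b c d n (j + 2) = ajn a b c d n (j + 1 + 1) := by norm_num
  rw [ej2, e1, e2]
  push_cast at *
  field_simp
  have hα1' : ((j:ℝ)+1)*b + ((n:ℝ)-(j+1)-1)*d ≠ 0 := by
    rw [mul_comm, mul_comm _ d]; exact hα1
  have hα2' : (k:ℝ)*b + d*((n:ℝ)-k-1) ≠ 0 := by
    rw [mul_comm]; exact hα2
  rw [div_sub_div _ _ hα1' hα2', mul_div_assoc', div_eq_div_iff (mul_ne_zero hα1' hα2') (mul_ne_zero hα1' hα2')]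
  ring
end

section
/- The polynomial Φ_n is convex on the closed first quadrant [0,∞)². -/
noncomputable def mSeq (a b c d : ℝ) (n j : ℕ) : ℝ :=
  ∏ k ∈ Finset.range j,
    (a * k + c * ((n : ℝ) - k - 1)) / (b * k + d * ((n : ℝ) - k - 1))

lemma ajn_eq (a b c d : ℝ) (n j : ℕ) :
    ajn a b c d n j = (n.choose j : ℝ) * mSeq a b c d n j := rfl

noncomputable def quadP (a b c d : ℝ) (N s : ℕ) (x y : ℝ) : ℝ :=
  ∑ j ∈ Finset.range (N+1),
    (N.choose j : ℝ) * mSeq a b c d (N+2) (j+s) * x^j * y^(N-j)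

section aux
variable {a b c d : ℝ} {n : ℕ}

lemma den_pos (hb : 0 < b) (hd : 0 < d) (hn : 2 ≤ n) {k : ℕ} (hk : k < n) :
    0 < b * k + d * ((n : ℝ) - k - 1) := by
  rcases Nat.eq_zero_or_pos k with h | h
  · subst h
    have : (2:ℝ) ≤ n := by exact_mod_cast hn
    push_cast
    nlinarith
  · have h1 : (0:ℝ) < b * k := by positivity
    have h2 : (0:ℝ) ≤ (n : ℝ) - k - 1 := by
      have : (k:ℝ) + 1 ≤ n := by exact_mod_cast hk
      linarith
    nlinarith

lemma mSeq_pos (ha : 0 < a) (hb : 0 < b) (hc : 0 < c) (hd : 0 < d) (hn : 2 ≤ n)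
    {j : ℕ} (hj : j ≤ n) : 0 < mSeq a b c d n j := by
  apply Finset.prod_pos
  intro k hk
  have hkn : k < n := lt_of_lt_of_le (Finset.mem_range.mp hk) hj
  exact div_pos (den_pos ha hc hn hkn) (den_pos hb hd hn hkn)

lemma ratio_mono (hb : 0 < b) (hd : 0 < d)
    (habcd : b * c < a * d) (hn : 2 ≤ n) {k : ℕ} (hk : k + 2 ≤ n) :
    (a * k + c * ((n : ℝ) - k - 1)) / (b * k + d * ((n : ℝ) - k - 1)) ≤
    (a * (k+1 : ℕ) + c * ((n : ℝ) - (k+1 : ℕ) - 1)) / (b * (k+1 : ℕ) + d * ((n : ℝ) - (k+1 : ℕ) - 1)) := by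
  have h1 : 0 < b * k + d * ((n : ℝ) - k - 1) := den_pos hb hd hn (by omega)
  have h2 : 0 < b * (k+1 : ℕ) + d * ((n : ℝ) - (k+1 : ℕ) - 1) := den_pos hb hd hn (by omega)
  rw [div_le_div_iff₀ h1 h2]
  push_cast
  have hn1 : (2:ℝ) ≤ n := by exact_mod_cast hn
  nlinarith [hn1]

lemma mSeq_logconvex (ha : 0 < a) (hb : 0 < b) (hc : 0 < c) (hd : 0 < d)
    (habcd : b * c < a * d) (hn : 2 ≤ n) {k : ℕ} (hk : k + 2 ≤ n) :
    mSeq a b c d n (k+1) ^ 2 ≤ mSeq a b c d n k * mSeq a b c d n (k+2) := by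
  have hm : 0 < mSeq a b c d n k := mSeq_pos ha hb hc hd hn (by omega)
  have hr1 : 0 < (a * k + c * ((n : ℝ) - k - 1)) / (b * k + d * ((n : ℝ) - k - 1)) :=
    div_pos (den_pos ha hc hn (by omega)) (den_pos hb hd hn (by omega))
  have hr2 : 0 < (a * (k+1:ℕ) + c * ((n : ℝ) - (k+1:ℕ) - 1)) / (b * (k+1:ℕ) + d * ((n : ℝ) - (k+1:ℕ) - 1)) :=
    div_pos (den_pos ha hc hn (by omega)) (den_pos hb hd hn (by omega))
  have hmono := ratio_mono hb hd habcd hn hk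
  have e1 : mSeq a b c d n (k+1) = mSeq a b c d n k *
      ((a * k + c * ((n : ℝ) - k - 1)) / (b * k + d * ((n : ℝ) - k - 1))) :=
    Finset.prod_range_succ _ k
  have e2 : mSeq a b c d n (k+2) = mSeq a b c d n (k+1) *
      ((a * (k+1:ℕ) + c * ((n : ℝ) - (k+1:ℕ) - 1)) / (b * (k+1:ℕ) + d * ((n : ℝ) - (k+1:ℕ) - 1))) :=
    Finset.prod_range_succ _ (k+1)
  rw [e1, e2, e1]
  nlinarith [hm, hr1, hr2, hmono, mul_pos hm hr1]

lemma mSeq_bracket (ha : 0 < a) (hb : 0 < b) (hc : 0 < c) (hd : 0 < d)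
    (habcd : b * c < a * d) (hn : 2 ≤ n) {i j : ℕ} (hi : i + 2 ≤ n) (hj : j + 2 ≤ n) :
    2 * (mSeq a b c d n (i+1) * mSeq a b c d n (j+1)) ≤
    mSeq a b c d n (i+2) * mSeq a b c d n j + mSeq a b c d n i * mSeq a b c d n (j+2) := by
  have p0 : 0 < mSeq a b c d n i := mSeq_pos ha hb hc hd hn (by omega)
  have p1 : 0 < mSeq a b c d n (i+1) := mSeq_pos ha hb hc hd hn (by omega)
  have p2 : 0 < mSeq a b c d n (i+2) := mSeq_pos ha hb hc hd hn hi
  have q0 : 0 < mSeq a b c d n j := mSeq_pos ha hb hc hd hn (by omega)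
  have q1 : 0 < mSeq a b c d n (j+1) := mSeq_pos ha hb hc hd hn (by omega)
  have q2 : 0 < mSeq a b c d n (j+2) := mSeq_pos ha hb hc hd hn hj
  have li : mSeq a b c d n (i+1) ^ 2 ≤ mSeq a b c d n i * mSeq a b c d n (i+2) :=
    mSeq_logconvex ha hb hc hd habcd hn hi
  have lj : mSeq a b c d n (j+1) ^ 2 ≤ mSeq a b c d n j * mSeq a b c d n (j+2) :=
    mSeq_logconvex ha hb hc hd habcd hn hj
  nlinarith [sq_nonneg (mSeq a b c d n (i+2) * mSeq a b c d n j - mSeq a b c d n i * mSeq a b c d n (j+2)),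
    sq_nonneg (mSeq a b c d n (i+2) * mSeq a b c d n j + mSeq a b c d n i * mSeq a b c d n (j+2)),
    mul_pos p1 q1, mul_pos p0 q0, mul_pos p2 q2, mul_pos p0 q2, mul_pos p2 q0,
    mul_le_mul li lj (sq_nonneg _) (le_of_lt (mul_pos p0 p2)),
    sq_nonneg (mSeq a b c d n (i+2) * mSeq a b c d n j + mSeq a b c d n i * mSeq a b c d n (j+2) - 2 * (mSeq a b c d n (i+1) * mSeq a b c d n (j+1)))]

end aux

lemma choose_xx (N j : ℕ) :
    ((N+2).choose (j+2) : ℝ) * ((j:ℝ)+2) * ((j:ℝ)+1) =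
    ((N:ℝ)+2) * ((N:ℝ)+1) * (N.choose j : ℝ) := by
  have h1 := Nat.add_one_mul_choose_eq (N+1) (j+1)
  have h2 := Nat.add_one_mul_choose_eq N j
  have h1' : ((N:ℝ)+2) * ((N+1).choose (j+1) : ℝ) = ((N+2).choose (j+2) : ℝ) * ((j:ℝ)+2) := by
    exact_mod_cast congrArg (Nat.cast : ℕ → ℝ) h1
  have h2' : ((N:ℝ)+1) * (N.choose j : ℝ) = ((N+1).choose (j+1) : ℝ) * ((j:ℝ)+1) := by
    exact_mod_cast congrArg (Nat.cast : ℕ → ℝ) h2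
  nlinarith [h1', h2']

lemma choose_xy (N j : ℕ) (hj : j ≤ N) :
    ((N+2).choose (j+1) : ℝ) * ((j:ℝ)+1) * ((N:ℝ)+1-(j:ℝ)) =
    ((N:ℝ)+2) * ((N:ℝ)+1) * (N.choose j : ℝ) := by
  have h1 := Nat.add_one_mul_choose_eq (N+1) j
  have h2 := Nat.choose_mul_succ_eq N j
  have h1' : ((N:ℝ)+2) * ((N+1).choose j : ℝ) = ((N+2).choose (j+1) : ℝ) * ((j:ℝ)+1) := by
    exact_mod_cast congrArg (Nat.cast : ℕ → ℝ) h1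
  have h2' : (N.choose j : ℝ) * ((N:ℝ)+1) = ((N+1).choose j : ℝ) * ((N:ℝ)+1-(j:ℝ)) := by
    have h3 : ((N.choose j * (N+1) : ℕ) : ℝ) = (((N+1).choose j * (N+1-j) : ℕ) : ℝ) := by
      exact_mod_cast congrArg (Nat.cast : ℕ → ℝ) h2
    push_cast [Nat.cast_sub (by omega : j ≤ N+1)] at h3
    linarith [h3]
  nlinarith [h1', h2']

lemma choose_yy (N j : ℕ) (hj : j ≤ N) :
    ((N+2).choose j : ℝ) * ((N:ℝ)+2-(j:ℝ)) * ((N:ℝ)+1-(j:ℝ)) =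
    ((N:ℝ)+2) * ((N:ℝ)+1) * (N.choose j : ℝ) := by
  have h1 := Nat.choose_mul_succ_eq (N+1) j
  have h2 := Nat.choose_mul_succ_eq N j
  have h1' : ((N+1).choose j : ℝ) * ((N:ℝ)+2) = ((N+2).choose j : ℝ) * ((N:ℝ)+2-(j:ℝ)) := by
    have h3 : (((N+1).choose j * (N+1+1) : ℕ) : ℝ) = (((N+1+1).choose j * (N+1+1-j) : ℕ) : ℝ) := by
      exact_mod_cast congrArg (Nat.cast : ℕ → ℝ) h1
    push_cast [Nat.cast_sub (by omega : j ≤ N+2)] at h3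
    linarith [h3]
  have h2' : (N.choose j : ℝ) * ((N:ℝ)+1) = ((N+1).choose j : ℝ) * ((N:ℝ)+1-(j:ℝ)) := by
    have h3 : ((N.choose j * (N+1) : ℕ) : ℝ) = (((N+1).choose j * (N+1-j) : ℕ) : ℝ) := by
      exact_mod_cast congrArg (Nat.cast : ℕ → ℝ) h2
    push_cast [Nat.cast_sub (by omega : j ≤ N+1)] at h3
    linarith [h3]
  nlinarith [h1', h2']

section quad
variable {a b c d : ℝ} {N : ℕ} {x y : ℝ}

lemma quadP_nonneg (ha : 0 < a) (hb : 0 < b) (hc : 0 < c) (hd : 0 < d)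
    (hx : 0 ≤ x) (hy : 0 ≤ y) {s : ℕ} (hs : s ≤ 2) :
    0 ≤ quadP a b c d N s x y := by
  apply Finset.sum_nonneg
  intro j hj
  have hj' : j + s ≤ N + 2 := by
    have := Finset.mem_range.mp hj; omega
  have hm := mSeq_pos ha hb hc hd (by omega) hj'
  positivity

lemma quadP_cs (ha : 0 < a) (hb : 0 < b) (hc : 0 < c) (hd : 0 < d)
    (habcd : b * c < a * d) (hx : 0 ≤ x) (hy : 0 ≤ y) :
    (quadP a b c d N 1 x y)^2 ≤ quadP a b c d N 2 x y * quadP a b c d N 0 x y := by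
  have key : 0 ≤ ∑ i ∈ Finset.range (N+1), ∑ j ∈ Finset.range (N+1),
      ((N.choose i : ℝ) * (N.choose j : ℝ) * (x^i * y^(N-i)) * (x^j * y^(N-j))) *
      (mSeq a b c d (N+2) (i+2) * mSeq a b c d (N+2) (j+0)
        + mSeq a b c d (N+2) (i+0) * mSeq a b c d (N+2) (j+2)
        - 2 * (mSeq a b c d (N+2) (i+1) * mSeq a b c d (N+2) (j+1))) := by
    apply Finset.sum_nonneg; intro i hi
    apply Finset.sum_nonneg; intro j hj
    have hi' := Finset.mem_range.mp hi
    have hj' := Finset.mem_range.mp hj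
    apply mul_nonneg
    · positivity
    · have hbr := mSeq_bracket ha hb hc hd habcd (by omega : 2 ≤ N+2)
        (by omega : i + 2 ≤ N+2) (by omega : j + 2 ≤ N+2)
      simp only [Nat.add_zero]
      linarith
  have expand : ∑ i ∈ Finset.range (N+1), ∑ j ∈ Finset.range (N+1),
      ((N.choose i : ℝ) * (N.choose j : ℝ) * (x^i * y^(N-i)) * (x^j * y^(N-j))) *
      (mSeq a b c d (N+2) (i+2) * mSeq a b c d (N+2) (j+0)
        + mSeq a b c d (N+2) (i+0) * mSeq a b c d (N+2) (j+2)
        - 2 * (mSeq a b c d (N+2) (i+1) * mSeq a b c d (N+2) (j+1)))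
      = quadP a b c d N 2 x y * quadP a b c d N 0 x y
        + quadP a b c d N 0 x y * quadP a b c d N 2 x y
        - 2 * (quadP a b c d N 1 x y * quadP a b c d N 1 x y) := by
    rw [quadP, quadP, quadP, Finset.sum_mul_sum, Finset.sum_mul_sum, Finset.sum_mul_sum,
      ← Finset.sum_add_distrib, Finset.mul_sum, ← Finset.sum_sub_distrib]
    refine Finset.sum_congr rfl fun i _ => ?_
    rw [← Finset.sum_add_distrib, Finset.mul_sum, ← Finset.sum_sub_distrib]
    refine Finset.sum_congr rfl fun j _ => ?_
    ring
  nlinarith [key, expand]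

lemma quad_psd (ha : 0 < a) (hb : 0 < b) (hc : 0 < c) (hd : 0 < d)
    (habcd : b * c < a * d) (hx : 0 ≤ x) (hy : 0 ≤ y) (u v : ℝ) :
    0 ≤ u^2 * quadP a b c d N 2 x y + 2*(u*v) * quadP a b c d N 1 x y
      + v^2 * quadP a b c d N 0 x y := by
  have hP : 0 ≤ quadP a b c d N 2 x y := quadP_nonneg ha hb hc hd hx hy (by omega)
  have hQ : 0 ≤ quadP a b c d N 1 x y := quadP_nonneg ha hb hc hd hx hy (by omega)
  have hR : 0 ≤ quadP a b c d N 0 x y := quadP_nonneg ha hb hc hd hx hy (by omega)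
  have hCS := quadP_cs (N := N) ha hb hc hd habcd hx hy
  rcases eq_or_lt_of_le hP with h | h
  · have hQ0 : quadP a b c d N 1 x y = 0 := by nlinarith [sq_nonneg (quadP a b c d N 1 x y)]
    rw [hQ0, ← h]
    nlinarith [sq_nonneg v]
  · by_contra hneg
    push_neg at hneg
    have h9 : 0 ≤ quadP a b c d N 2 x y * (u^2 * quadP a b c d N 2 x y
        + 2*(u*v) * quadP a b c d N 1 x y + v^2 * quadP a b c d N 0 x y) := by
      nlinarith [sq_nonneg (u * quadP a b c d N 2 x y + v * quadP a b c d N 1 x y),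
        mul_nonneg (sq_nonneg v) (sub_nonneg.mpr hCS)]
    nlinarith [mul_pos h (neg_pos.mpr hneg)]

end quad

lemma S1eq (a b c d : ℝ) (N : ℕ) (u x y : ℝ) :
    ∑ j ∈ Finset.range (N+2+1),
      ajn a b c d (N+2) j * ((j:ℝ) * ((j-1:ℕ):ℝ)) * u^2 * x^(j-1-1) * y^(N+2-j)
    = ((N:ℝ)+2) * ((N:ℝ)+1) * (u^2 * quadP a b c d N 2 x y) := by
  rw [Finset.sum_range_succ', Finset.sum_range_succ']
  rw [quadP, Finset.mul_sum, Finset.mul_sum]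
  have hz0 : ajn a b c d (N+2) 0 * ((0:ℕ):ℝ) * (((0:ℕ)-1:ℕ):ℝ) * u^2 * x^((0:ℕ)-1-1) * y^(N+2-0) = 0 := by
    norm_num
  norm_num
  refine Finset.sum_congr rfl fun j hj => ?_
  have hjN : j ≤ N := by have := Finset.mem_range.mp hj; omega
  rw [show N+2-(j+2) = N-j from by omega, ajn_eq]
  linear_combination (mSeq a b c d (N+2) (j+2) * u^2 * x^j * y^(N-j)) * choose_xx N j

lemma S2eq (a b c d : ℝ) (N : ℕ) (u v x y : ℝ) :
    ∑ j ∈ Finset.range (N+2+1),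
      2 * (ajn a b c d (N+2) j * ((j:ℝ) * ((N+2-j:ℕ):ℝ)) * (u*v) * x^(j-1) * y^(N+2-j-1))
    = ((N:ℝ)+2) * ((N:ℝ)+1) * (2*(u*v) * quadP a b c d N 1 x y) := by
  rw [Finset.sum_range_succ', Finset.sum_range_succ]
  rw [quadP, Finset.mul_sum, Finset.mul_sum]
  norm_num
  refine Finset.sum_congr rfl fun j hj => ?_
  have hjN : j ≤ N := by have := Finset.mem_range.mp hj; omega
  rw [show N+2-(j+1) = N+1-j from by omega, show N+1-j-1 = N-j from by omega,
    ajn_eq, Nat.cast_sub (show j ≤ N+1 from by omega)]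
  push_cast
  linear_combination (2*(u*v) * mSeq a b c d (N+2) (j+1) * x^j * y^(N-j)) * choose_xy N j hjN

lemma S3eq (a b c d : ℝ) (N : ℕ) (v x y : ℝ) :
    ∑ j ∈ Finset.range (N+2+1),
      ajn a b c d (N+2) j * (((N+2-j:ℕ):ℝ) * ((N+2-j-1:ℕ):ℝ)) * v^2 * x^j * y^(N+2-j-1-1)
    = ((N:ℝ)+2) * ((N:ℝ)+1) * (v^2 * quadP a b c d N 0 x y) := by
  rw [Finset.sum_range_succ, Finset.sum_range_succ]
  rw [quadP, Finset.mul_sum, Finset.mul_sum]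
  rw [show N+2-(N+2) = 0 from by omega, show N+2-(N+1)-1 = 0 from by omega]
  norm_num
  refine Finset.sum_congr rfl fun j hj => ?_
  have hjN : j ≤ N := by have := Finset.mem_range.mp hj; omega
  rw [show N+2-j-1 = N+1-j from by omega, ajn_eq,
    Nat.cast_sub (show j ≤ N+2 from by omega), Nat.cast_sub (show j ≤ N+1 from by omega),
    show N+1-j-1 = N-j from by omega]
  push_cast
  linear_combination (v^2 * mSeq a b c d (N+2) j * x^j * y^(N-j)) * choose_yy N j hjN

lemma line_convexOn (a b c d : ℝ) (ha : 0 < a) (hb : 0 < b) (hc : 0 < c) (hd : 0 < d)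
    (habcd : b * c < a * d) (N : ℕ) (x0 y0 u v : ℝ)
    (hx0 : 0 ≤ x0) (hy0 : 0 ≤ y0) (hx1 : 0 ≤ x0 + u) (hy1 : 0 ≤ y0 + v) :
    ConvexOn ℝ (Set.Icc (0:ℝ) 1)
      (fun t => ∑ j ∈ Finset.range (N+2+1),
        ajn a b c d (N+2) j * (x0 + t*u)^j * (y0 + t*v)^(N+2-j)) := by
  have hXd : ∀ t : ℝ, HasDerivAt (fun t : ℝ => x0 + t * u) u t := by
    intro t
    simpa using ((hasDerivAt_id t).mul_const u).const_add x0
  have hYd : ∀ t : ℝ, HasDerivAt (fun t : ℝ => y0 + t * v) v t := by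
    intro t
    simpa using ((hasDerivAt_id t).mul_const v).const_add y0
  have hF1 : ∀ t : ℝ, HasDerivAt
      (fun t => ∑ j ∈ Finset.range (N+2+1),
        ajn a b c d (N+2) j * (x0 + t*u)^j * (y0 + t*v)^(N+2-j))
      (∑ j ∈ Finset.range (N+2+1),
        (ajn a b c d (N+2) j * ((j:ℝ) * (x0+t*u)^(j-1) * u) * (y0+t*v)^(N+2-j)
          + ajn a b c d (N+2) j * (x0+t*u)^j * (((N+2-j:ℕ):ℝ) * (y0+t*v)^(N+2-j-1) * v))) t := by
    intro t
    exact HasDerivAt.fun_sum fun j hj =>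
      (((hXd t).pow j).const_mul (ajn a b c d (N+2) j)).fun_mul ((hYd t).fun_pow (N+2-j))
  have hterm : ∀ (j : ℕ) (t : ℝ), HasDerivAt
      (fun t => ajn a b c d (N+2) j * ((j:ℝ) * (x0+t*u)^(j-1) * u) * (y0+t*v)^(N+2-j)
          + ajn a b c d (N+2) j * (x0+t*u)^j * (((N+2-j:ℕ):ℝ) * (y0+t*v)^(N+2-j-1) * v))
      (ajn a b c d (N+2) j * ((j:ℝ) * ((j-1:ℕ):ℝ)) * u^2 * (x0+t*u)^(j-1-1) * (y0+t*v)^(N+2-j)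
        + 2 * (ajn a b c d (N+2) j * ((j:ℝ) * ((N+2-j:ℕ):ℝ)) * (u*v) * (x0+t*u)^(j-1) * (y0+t*v)^(N+2-j-1))
        + ajn a b c d (N+2) j * (((N+2-j:ℕ):ℝ) * ((N+2-j-1:ℕ):ℝ)) * v^2 * (x0+t*u)^j * (y0+t*v)^(N+2-j-1-1)) t := by
    intro j t
    have h := HasDerivAt.fun_add
      (((((hXd t).fun_pow (j-1)).const_mul ((j:ℕ):ℝ)).mul_const u).const_mul
          (ajn a b c d (N+2) j) |>.fun_mul ((hYd t).fun_pow (N+2-j)))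
      ((((hXd t).fun_pow j).const_mul (ajn a b c d (N+2) j)).fun_mul
        ((((hYd t).fun_pow (N+2-j-1)).const_mul (((N+2-j:ℕ):ℝ))).mul_const v))
    refine h.congr_deriv ?_
    ring
  have hF2 : ∀ t : ℝ, HasDerivAt
      (fun t => ∑ j ∈ Finset.range (N+2+1),
        (ajn a b c d (N+2) j * ((j:ℝ) * (x0+t*u)^(j-1) * u) * (y0+t*v)^(N+2-j)
          + ajn a b c d (N+2) j * (x0+t*u)^j * (((N+2-j:ℕ):ℝ) * (y0+t*v)^(N+2-j-1) * v)))
      (∑ j ∈ Finset.range (N+2+1),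
        (ajn a b c d (N+2) j * ((j:ℝ) * ((j-1:ℕ):ℝ)) * u^2 * (x0+t*u)^(j-1-1) * (y0+t*v)^(N+2-j)
          + 2 * (ajn a b c d (N+2) j * ((j:ℝ) * ((N+2-j:ℕ):ℝ)) * (u*v) * (x0+t*u)^(j-1) * (y0+t*v)^(N+2-j-1))
          + ajn a b c d (N+2) j * (((N+2-j:ℕ):ℝ) * ((N+2-j-1:ℕ):ℝ)) * v^2 * (x0+t*u)^j * (y0+t*v)^(N+2-j-1-1))) t :=
    fun t => HasDerivAt.fun_sum fun j _ => hterm j t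
  have hval : ∀ t : ℝ,
      (∑ j ∈ Finset.range (N+2+1),
        (ajn a b c d (N+2) j * ((j:ℝ) * ((j-1:ℕ):ℝ)) * u^2 * (x0+t*u)^(j-1-1) * (y0+t*v)^(N+2-j)
          + 2 * (ajn a b c d (N+2) j * ((j:ℝ) * ((N+2-j:ℕ):ℝ)) * (u*v) * (x0+t*u)^(j-1) * (y0+t*v)^(N+2-j-1))
          + ajn a b c d (N+2) j * (((N+2-j:ℕ):ℝ) * ((N+2-j-1:ℕ):ℝ)) * v^2 * (x0+t*u)^j * (y0+t*v)^(N+2-j-1-1)))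
      = ((N:ℝ)+2) * ((N:ℝ)+1) * (u^2 * quadP a b c d N 2 (x0+t*u) (y0+t*v)
          + 2*(u*v) * quadP a b c d N 1 (x0+t*u) (y0+t*v)
          + v^2 * quadP a b c d N 0 (x0+t*u) (y0+t*v)) := by
    intro t
    rw [Finset.sum_add_distrib, Finset.sum_add_distrib,
      S1eq a b c d N u (x0+t*u) (y0+t*v), S2eq a b c d N u v (x0+t*u) (y0+t*v),
      S3eq a b c d N v (x0+t*u) (y0+t*v)]
    ring
  have hdiff : Differentiable ℝ (fun t => ∑ j ∈ Finset.range (N+2+1),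
      ajn a b c d (N+2) j * (x0 + t*u)^j * (y0 + t*v)^(N+2-j)) :=
    fun t => (hF1 t).differentiableAt
  apply convexOn_of_hasDerivWithinAt2_nonneg (convex_Icc (0:ℝ) 1)
    (f' := fun t => ∑ j ∈ Finset.range (N+2+1),
        (ajn a b c d (N+2) j * ((j:ℝ) * (x0+t*u)^(j-1) * u) * (y0+t*v)^(N+2-j)
          + ajn a b c d (N+2) j * (x0+t*u)^j * (((N+2-j:ℕ):ℝ) * (y0+t*v)^(N+2-j-1) * v)))
    (f'' := fun t => ((N:ℝ)+2) * ((N:ℝ)+1) * (u^2 * quadP a b c d N 2 (x0+t*u) (y0+t*v)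
          + 2*(u*v) * quadP a b c d N 1 (x0+t*u) (y0+t*v)
          + v^2 * quadP a b c d N 0 (x0+t*u) (y0+t*v)))
    (hdiff.continuous.continuousOn)
  · intro t _
    exact (hF1 t).hasDerivWithinAt
  · intro t _
    exact ((hval t) ▸ (hF2 t)).hasDerivWithinAt
  · intro t ht
    rw [interior_Icc] at ht
    have hXt : 0 ≤ x0 + t*u := by nlinarith [ht.1.le, ht.2.le]
    have hYt : 0 ≤ y0 + t*v := by nlinarith [ht.1.le, ht.2.le]
    have hq := quad_psd (N := N) ha hb hc hd habcd hXt hYt u v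
    positivity

/-- The polynomial `Φ_n` is convex on the closed first quadrant. -/
theorem Phi_convexOn (a b c d : ℝ) (ha : 0 < a) (hb : 0 < b) (hc : 0 < c) (hd : 0 < d)
    (habcd : b * c < a * d) (n : ℕ) (hn : 2 ≤ n) :
    ConvexOn ℝ {p : ℝ × ℝ | 0 ≤ p.1 ∧ 0 ≤ p.2} (fun p => Phi a b c d n p.1 p.2) := by
  obtain ⟨N, rfl⟩ : ∃ N, n = N + 2 := ⟨n - 2, by omega⟩
  constructor
  · intro x hx y hy s t hs ht hst
    refine ⟨?_, ?_⟩ <;>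
      simp only [Set.mem_setOf_eq, Prod.fst_add, Prod.snd_add, Prod.smul_fst, Prod.smul_snd,
        smul_eq_mul]
    · exact add_nonneg (mul_nonneg hs hx.1) (mul_nonneg ht hy.1)
    · exact add_nonneg (mul_nonneg hs hx.2) (mul_nonneg ht hy.2)
  · rintro p hp q hq lam mu hlam hmu hsum
    have H := line_convexOn a b c d ha hb hc hd habcd N p.1 p.2 (q.1 - p.1) (q.2 - p.2)
      hp.1 hp.2 (by linarith [hq.1] : (0:ℝ) ≤ p.1 + (q.1 - p.1)) (by linarith [hq.2])
    have h01 : (0:ℝ) ∈ Set.Icc (0:ℝ) 1 := Set.left_mem_Icc.mpr zero_le_one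
    have h11 : (1:ℝ) ∈ Set.Icc (0:ℝ) 1 := Set.right_mem_Icc.mpr zero_le_one
    have key := H.2 h01 h11 hlam hmu hsum
    simp only [smul_eq_mul, mul_zero, mul_one, zero_add] at key
    have e0 : ∀ r s : ℝ, r + (0:ℝ) * s = r := by intro r s; ring
    have harg1 : p.1 + mu * (q.1 - p.1) = (lam • p + mu • q).1 := by
      simp only [Prod.fst_add, Prod.smul_fst, smul_eq_mul]
      have : lam = 1 - mu := by linarith
      rw [this]; ring
    have harg2 : p.2 + mu * (q.2 - p.2) = (lam • p + mu • q).2 := by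
      simp only [Prod.snd_add, Prod.smul_snd, smul_eq_mul]
      have : lam = 1 - mu := by linarith
      rw [this]; ring
    simp only [e0] at key
    rw [harg1, harg2] at key
    simp only [smul_eq_mul]
    have ePhi : ∀ x y : ℝ, Phi a b c d (N+2) x y
        = ∑ j ∈ Finset.range (N+2+1), ajn a b c d (N+2) j * x^j * y^(N+2-j) := by
      intro x y; rfl
    rw [ePhi, ePhi, ePhi]
    have e1 : ∀ r s : ℝ, r + 1 * (s - r) = s := fun r s => by ring
    simp only [e1] at key
    exact key
end

section
/- For every X ∈ (0,∞)², the matrix S_n(X) = D²Φ_n(X)·M(X) is symmetric and positive definite, where M(X) has rows (a·X₁, b·X₁) and (c·X₂, d·X₂). In particular, for every X ∈ [0,∞)², S_n(X) is positive semidefinite. -/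
open Finset

namespace SnAux

noncomputable def rho (a b c d : ℝ) (n : ℕ) (k : ℕ) : ℝ :=
  (a * k + c * ((n : ℝ) - k - 1)) / (b * k + d * ((n : ℝ) - k - 1))

noncomputable def Pp (a b c d : ℝ) (n j : ℕ) : ℝ := ∏ k ∈ Finset.range j, rho a b c d n k

noncomputable def ajn' (a b c d : ℝ) (n j : ℕ) : ℝ := (n.choose j : ℝ) * Pp a b c d n j

section

variable {a b c d : ℝ} {n : ℕ}

lemma nk1_nonneg {k : ℕ} (hk : k < n) : (0:ℝ) ≤ (n : ℝ) - k - 1 := by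
  have : (k:ℝ) + 1 ≤ (n:ℝ) := by exact_mod_cast hk
  linarith

lemma den_pos (hb : 0 < b) (hd : 0 < d) (hn : 2 ≤ n) {k : ℕ} (hk : k < n) :
    0 < b * k + d * ((n : ℝ) - k - 1) := by
  rcases Nat.eq_zero_or_pos k with h0 | h1
  · subst h0
    have : (2:ℝ) ≤ (n:ℝ) := by exact_mod_cast hn
    simp only [Nat.cast_zero, mul_zero, zero_add]
    nlinarith
  · have hk0 : (1:ℝ) ≤ (k:ℝ) := by exact_mod_cast h1
    have := nk1_nonneg (n := n) hk
    nlinarith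

lemma num_pos (ha : 0 < a) (hc : 0 < c) (hn : 2 ≤ n) {k : ℕ} (hk : k < n) :
    0 < a * k + c * ((n : ℝ) - k - 1) := by
  rcases Nat.eq_zero_or_pos k with h0 | h1
  · subst h0
    have : (2:ℝ) ≤ (n:ℝ) := by exact_mod_cast hn
    simp only [Nat.cast_zero, mul_zero, zero_add]
    nlinarith
  · have hk0 : (1:ℝ) ≤ (k:ℝ) := by exact_mod_cast h1
    have := nk1_nonneg (n := n) hk
    nlinarith

lemma rho_pos (ha : 0 < a) (hb : 0 < b) (hc : 0 < c) (hd : 0 < d) (hn : 2 ≤ n)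
    {k : ℕ} (hk : k < n) : 0 < rho a b c d n k :=
  div_pos (num_pos ha hc hn hk) (den_pos hb hd hn hk)

lemma rho_lt (ha : 0 < a) (hb : 0 < b) (hc : 0 < c) (hd : 0 < d)
    (hlt : b * c < a * d) (hn : 2 ≤ n) {k l : ℕ} (hkl : k < l) (hl : l < n) :
    rho a b c d n k < rho a b c d n l := by
  have hk : k < n := hkl.trans hl
  rw [rho, rho, div_lt_div_iff₀ (den_pos hb hd hn hk) (den_pos hb hd hn hl)]
  have hKL : (k:ℝ) < (l:ℝ) := by exact_mod_cast hkl
  have hN1 : (1:ℝ) ≤ (n:ℝ) - 1 := by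
    have : (2:ℝ) ≤ (n:ℝ) := by exact_mod_cast hn
    linarith
  have key : (a * l + c * ((n : ℝ) - l - 1)) * (b * k + d * ((n : ℝ) - k - 1))
      - (a * k + c * ((n : ℝ) - k - 1)) * (b * l + d * ((n : ℝ) - l - 1))
      = ((l:ℝ) - k) * ((n:ℝ) - 1) * (a * d - b * c) := by ring
  nlinarith [mul_pos (mul_pos (sub_pos.2 hKL) (lt_of_lt_of_le one_pos hN1)) (sub_pos.2 hlt)]

lemma rho_le (ha : 0 < a) (hb : 0 < b) (hc : 0 < c) (hd : 0 < d)
    (hlt : b * c < a * d) (hn : 2 ≤ n) {k l : ℕ} (hkl : k ≤ l) (hl : l < n) :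
    rho a b c d n k ≤ rho a b c d n l := by
  rcases eq_or_lt_of_le hkl with h | h
  · subst h; exact le_refl _
  · exact (rho_lt ha hb hc hd hlt hn h hl).le

lemma Pp_pos (ha : 0 < a) (hb : 0 < b) (hc : 0 < c) (hd : 0 < d) (hn : 2 ≤ n)
    {j : ℕ} (hj : j ≤ n) : 0 < Pp a b c d n j := by
  refine Finset.prod_pos fun k hk => ?_
  exact rho_pos ha hb hc hd hn (lt_of_lt_of_le (Finset.mem_range.1 hk) hj)

lemma ajn_eq (j : ℕ) : ajn a b c d n j = ajn' a b c d n j := rfl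

lemma ajn_pos (ha : 0 < a) (hb : 0 < b) (hc : 0 < c) (hd : 0 < d) (hn : 2 ≤ n)
    {j : ℕ} (hj : j ≤ n) : 0 < ajn a b c d n j := by
  rw [ajn_eq, ajn']
  exact mul_pos (by exact_mod_cast Nat.choose_pos hj) (Pp_pos ha hb hc hd hn hj)

/-- The fundamental recursion for the coefficients. -/
lemma ajn_rec (hb : 0 < b) (hd : 0 < d) (hn : 2 ≤ n) {j : ℕ} (hj : j < n) :
    ((j:ℝ) + 1) * (b * j + d * ((n:ℝ) - j - 1)) * ajn a b c d n (j+1)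
      = ((n:ℝ) - j) * (a * j + c * ((n:ℝ) - j - 1)) * ajn a b c d n j := by
  have hD := den_pos hb hd hn hj
  have hchoose : ((n.choose (j+1) * (j+1) : ℕ) : ℝ) = ((n.choose j * (n - j) : ℕ) : ℝ) := by
    exact_mod_cast congrArg (Nat.cast (R := ℝ)) (Nat.choose_succ_right_eq n j)
  have hnj : ((n - j : ℕ) : ℝ) = (n:ℝ) - j := by
    have := Nat.cast_sub (le_of_lt hj) (R := ℝ); exact this
  rw [ajn_eq, ajn_eq, ajn', ajn', Pp, Finset.prod_range_succ, ← Pp]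
  have hrho : (b * j + d * ((n:ℝ) - j - 1)) * rho a b c d n j
      = a * j + c * ((n:ℝ) - j - 1) := by
    rw [rho]; field_simp
  push_cast at hchoose
  rw [hnj] at hchoose
  linear_combination ((n.choose (j+1) : ℝ) * ((j:ℝ)+1) * Pp a b c d n j) * hrho
    + (Pp a b c d n j * (a * j + c * ((n:ℝ) - j - 1))) * hchoose

end

lemma absorb {n k : ℕ} (hn : 1 ≤ n) : n.choose (k+1) * (k+1) = n * (n-1).choose k := by
  obtain ⟨m, rfl⟩ : ∃ m, n = m + 1 := ⟨n - 1, by omega⟩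
  have := Nat.add_one_mul_choose_eq m k
  simp only [Nat.succ_eq_add_one, Nat.add_sub_cancel] at this ⊢
  omega

lemma scalar_id {n : ℕ} (hn : 1 ≤ n) (t : ℕ) :
    (t+2) * ((t+1) * ((2*n).choose (t+2))) = (2*n) * ((2*n-1) * ((2*n-2).choose t)) := by
  have h1 : (2*n).choose (t+2) * (t+2) = (2*n) * (2*n-1).choose (t+1) := absorb (by omega)
  have h2 : (2*n-1).choose (t+1) * (t+1) = (2*n-1) * ((2*n-1)-1).choose t := absorb (by omega)
  have h3 : (2*n-1) - 1 = 2*n-2 := by omega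
  rw [h3] at h2
  calc (t+2) * ((t+1) * ((2*n).choose (t+2)))
      = ((2*n).choose (t+2) * (t+2)) * (t+1) := by ring
    _ = (2*n) * ((2*n-1).choose (t+1) * (t+1)) := by rw [h1]; ring
    _ = (2*n) * ((2*n-1) * ((2*n-2).choose t)) := by rw [h2]

lemma vander (m s : ℕ) :
    ∑ p ∈ Finset.HasAntidiagonal.antidiagonal s, ((m.choose p.1 : ℝ) * (m.choose p.2 : ℝ))
      = ((2*m).choose s : ℝ) := by
  have := Nat.add_choose_eq m m s
  have h2 : m + m = 2*m := by ring
  rw [h2] at this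
  rw [this]
  push_cast
  rfl

lemma bin_id {n : ℕ} (hn : 1 ≤ n) (s : ℕ) :
    ∑ p ∈ Finset.HasAntidiagonal.antidiagonal s,
      ((n:ℝ) * s * ((s:ℝ) - 1) - (4*(n:ℝ) - 2) * p.1 * p.2)
        * (n.choose p.1 : ℝ) * (n.choose p.2 : ℝ) = 0 := by
  rcases Nat.lt_or_ge s 2 with hs | hs
  · refine Finset.sum_eq_zero fun p hp => ?_
    have hmem := Finset.HasAntidiagonal.mem_antidiagonal.1 hp
    have hss : (s:ℝ) * ((s:ℝ) - 1) = 0 := by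
      interval_cases s <;> norm_num
    have hpp : (p.1 : ℝ) * (p.2 : ℝ) = 0 := by
      have : p.1 = 0 ∨ p.2 = 0 := by omega
      rcases this with h | h <;> simp [h]
    have : (n:ℝ) * s * ((s:ℝ) - 1) - (4*(n:ℝ) - 2) * p.1 * p.2 = 0 := by
      rw [mul_assoc, hss]
      nlinarith [hpp]
    rw [this, zero_mul, zero_mul]
  · obtain ⟨t, rfl⟩ : ∃ t, s = t + 2 := ⟨s - 2, by omega⟩
    have split : ∀ p ∈ Finset.HasAntidiagonal.antidiagonal (t+2),
        ((n:ℝ) * ((t+2 : ℕ):ℝ) * (((t+2 : ℕ):ℝ) - 1) - (4*(n:ℝ) - 2) * p.1 * p.2)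
          * (n.choose p.1 : ℝ) * (n.choose p.2 : ℝ)
        = ((n:ℝ) * (t+2) * ((t:ℝ) + 1)) * ((n.choose p.1 : ℝ) * (n.choose p.2 : ℝ))
          - (4*(n:ℝ) - 2) * ((p.1:ℝ) * (n.choose p.1 : ℝ) * ((p.2:ℝ) * (n.choose p.2 : ℝ))) := by
      intro p _; push_cast; ring
    rw [Finset.sum_congr rfl split, Finset.sum_sub_distrib, ← Finset.mul_sum, ← Finset.mul_sum,
      vander]
    -- second sum
    have hS2 : ∑ p ∈ Finset.HasAntidiagonal.antidiagonal (t+2),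
        ((p.1:ℝ) * (n.choose p.1 : ℝ) * ((p.2:ℝ) * (n.choose p.2 : ℝ)))
        = (n:ℝ)^2 * ((2*n-2).choose t : ℝ) := by
      have hfil : ∑ p ∈ Finset.HasAntidiagonal.antidiagonal (t+2),
          ((p.1:ℝ) * (n.choose p.1 : ℝ) * ((p.2:ℝ) * (n.choose p.2 : ℝ)))
          = ∑ p ∈ (Finset.HasAntidiagonal.antidiagonal (t+2)).filter (fun p => p.1 ≠ 0 ∧ p.2 ≠ 0),
          ((p.1:ℝ) * (n.choose p.1 : ℝ) * ((p.2:ℝ) * (n.choose p.2 : ℝ))) := by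
        refine (Finset.sum_filter_of_ne fun p _ hne => ?_).symm
        constructor
        · intro h0; rw [h0] at hne; simp at hne
        · intro h0; rw [h0] at hne; simp at hne
      rw [hfil]
      have hbij : ∑ p ∈ (Finset.HasAntidiagonal.antidiagonal (t+2)).filter (fun p => p.1 ≠ 0 ∧ p.2 ≠ 0),
          ((p.1:ℝ) * (n.choose p.1 : ℝ) * ((p.2:ℝ) * (n.choose p.2 : ℝ)))
          = ∑ q ∈ Finset.HasAntidiagonal.antidiagonal t,
            (((q.1+1:ℕ):ℝ) * (n.choose (q.1+1) : ℝ) * (((q.2+1:ℕ):ℝ) * (n.choose (q.2+1) : ℝ))) := by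
        refine Finset.sum_nbij' (fun p => (p.1 - 1, p.2 - 1)) (fun q => (q.1 + 1, q.2 + 1))
          ?_ ?_ ?_ ?_ ?_
        · intro p hp
          simp only [Finset.mem_filter, Finset.HasAntidiagonal.mem_antidiagonal] at hp ⊢
          omega
        · intro q hq
          simp only [Finset.mem_filter, Finset.HasAntidiagonal.mem_antidiagonal] at hq ⊢
          omega
        · intro p hp
          simp only [Finset.mem_filter, Finset.HasAntidiagonal.mem_antidiagonal] at hp
          have : p.1 - 1 + 1 = p.1 := by omega
          have h2 : p.2 - 1 + 1 = p.2 := by omega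
          simp [this, h2]
        · intro q hq; simp
        · intro p hp
          simp only [Finset.mem_filter, Finset.HasAntidiagonal.mem_antidiagonal] at hp
          have h1 : p.1 - 1 + 1 = p.1 := by omega
          have h2 : p.2 - 1 + 1 = p.2 := by omega
          rw [h1, h2]
      rw [hbij]
      have habs : ∀ q : ℕ, (((q+1:ℕ):ℝ) * (n.choose (q+1) : ℝ)) = (n:ℝ) * ((n-1).choose q : ℝ) := by
        intro q
        have h0 := absorb (n := n) (k := q) hn
        have : ((n.choose (q+1) * (q+1) : ℕ) : ℝ) = ((n * (n-1).choose q : ℕ) : ℝ) := by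
          rw [h0]
        push_cast at this
        push_cast
        linarith [this]
      have : ∀ q ∈ Finset.HasAntidiagonal.antidiagonal t,
          (((q.1+1:ℕ):ℝ) * (n.choose (q.1+1) : ℝ) * (((q.2+1:ℕ):ℝ) * (n.choose (q.2+1) : ℝ)))
          = (n:ℝ)^2 * (((n-1).choose q.1 : ℝ) * ((n-1).choose q.2 : ℝ)) := by
        intro q _
        rw [habs q.1, habs q.2]; ring
      rw [Finset.sum_congr rfl this, ← Finset.mul_sum]
      have := vander (n-1) t
      have h2 : 2*(n-1) = 2*n-2 := by omega
      rw [h2] at this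
      rw [this]
    rw [hS2]
    -- final scalar identity
    have hnat := scalar_id hn t
    have hcast : ((t:ℝ)+2) * (((t:ℝ)+1) * (((2*n).choose (t+2) : ℕ) : ℝ))
        = (2*(n:ℝ)) * ((2*(n:ℝ)-1) * (((2*n-2).choose t : ℕ) : ℝ)) := by
      have := congrArg (Nat.cast (R := ℝ)) hnat
      push_cast at this
      have h1 : ((2*n-1 : ℕ):ℝ) = 2*(n:ℝ)-1 := by
        have : (1:ℕ) ≤ 2*n := by omega
        push_cast [Nat.cast_sub this]; ring
      rw [h1] at this
      convert this using 2 <;> push_cast <;> ring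
    push_cast
    nlinarith [hcast]

section
variable {a b c d : ℝ} {n : ℕ}

lemma Pp_step (ha : 0 < a) (hb : 0 < b) (hc : 0 < c) (hd : 0 < d)
    (hlt : b * c < a * d) (hn : 2 ≤ n) {k l : ℕ} (hkl : k ≤ l) (hl : l < n) :
    Pp a b c d n (k+1) * Pp a b c d n l ≤ Pp a b c d n k * Pp a b c d n (l+1) := by
  have e1 : Pp a b c d n (k+1) = Pp a b c d n k * rho a b c d n k := Finset.prod_range_succ _ _
  have e2 : Pp a b c d n (l+1) = Pp a b c d n l * rho a b c d n l := Finset.prod_range_succ _ _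
  rw [e1, e2]
  have hPk : 0 < Pp a b c d n k := Pp_pos ha hb hc hd hn (by omega)
  have hPl : 0 < Pp a b c d n l := Pp_pos ha hb hc hd hn (by omega)
  have hrho := rho_le ha hb hc hd hlt hn hkl hl
  have hrk : 0 < rho a b c d n k := rho_pos ha hb hc hd hn (by omega)
  nlinarith [mul_le_mul_of_nonneg_left hrho (le_of_lt (mul_pos hPk hPl))]

lemma Pp_chain (ha : 0 < a) (hb : 0 < b) (hc : 0 < c) (hd : 0 < d)
    (hlt : b * c < a * d) (hn : 2 ≤ n) :
    ∀ (t k l : ℕ), t ≤ k → k ≤ l → l + t ≤ n →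
      Pp a b c d n k * Pp a b c d n l ≤ Pp a b c d n (k - t) * Pp a b c d n (l + t) := by
  intro t
  induction t with
  | zero => intro k l _ _ _; simp
  | succ t ih =>
    intro k l htk hkl hln
    have h1 := ih k l (by omega) hkl (by omega)
    refine h1.trans ?_
    have h2 : Pp a b c d n ((k - (t+1)) + 1) * Pp a b c d n (l + t)
        ≤ Pp a b c d n (k - (t+1)) * Pp a b c d n ((l + t) + 1) :=
      Pp_step ha hb hc hd hlt hn (by omega) (by omega)
    have e1 : (k - (t+1)) + 1 = k - t := by omega
    have e2 : (l + t) + 1 = l + (t+1) := by omega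
    rw [e1, e2] at h2
    exact h2

lemma le_min_of_prod {i j k l : ℕ} (hij : i ≤ j) (hkl : k ≤ l) (hsum : i + j = k + l)
    (hprod : i * j ≤ k * l) : i ≤ k := by
  by_contra h
  push_neg at h
  have h1 : (k:ℤ) * l - (i:ℤ) * j = ((k:ℤ) - i) * ((j:ℤ) - k) := by
    have hs : (i:ℤ) + j = (k:ℤ) + l := by exact_mod_cast hsum
    linear_combination (-(k:ℤ)) * hs
  have h2 : ((k:ℤ) - i) * ((j:ℤ) - k) < 0 := by
    apply mul_neg_of_neg_of_pos
    · have : (k:ℤ) < i := by exact_mod_cast h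
      linarith
    · have : (k:ℤ) < i := by exact_mod_cast h
      have : (i:ℤ) ≤ j := by exact_mod_cast hij
      omega
  have h3 : (i:ℤ) * j ≤ (k:ℤ) * l := by exact_mod_cast hprod
  omega

/-- Log-convexity comparison: pairs with the same sum and smaller product (wider spread)
have a larger `Pp`-product. -/
lemma Pp_compare (ha : 0 < a) (hb : 0 < b) (hc : 0 < c) (hd : 0 < d)
    (hlt : b * c < a * d) (hn : 2 ≤ n) {p q : ℕ × ℕ}
    (hp1 : p.1 ≤ n) (hp2 : p.2 ≤ n) (hq1 : q.1 ≤ n) (hq2 : q.2 ≤ n)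
    (hsum : p.1 + p.2 = q.1 + q.2) (hprod : p.1 * p.2 ≤ q.1 * q.2) :
    Pp a b c d n q.1 * Pp a b c d n q.2 ≤ Pp a b c d n p.1 * Pp a b c d n p.2 := by
  -- normalize to ordered pairs
  obtain ⟨i, j, hij, hPij, hsij, hprij, hjn⟩ :
      ∃ i j, i ≤ j ∧ Pp a b c d n p.1 * Pp a b c d n p.2 = Pp a b c d n i * Pp a b c d n j
        ∧ i + j = p.1 + p.2 ∧ i * j = p.1 * p.2 ∧ j ≤ n := by
    rcases le_total p.1 p.2 with h | h
    · exact ⟨p.1, p.2, h, rfl, rfl, rfl, hp2⟩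
    · exact ⟨p.2, p.1, h, mul_comm _ _, by omega, by ring, hp1⟩
  obtain ⟨k, l, hkl, hPkl, hskl, hprkl, hln⟩ :
      ∃ k l, k ≤ l ∧ Pp a b c d n q.1 * Pp a b c d n q.2 = Pp a b c d n k * Pp a b c d n l
        ∧ k + l = q.1 + q.2 ∧ k * l = q.1 * q.2 ∧ l ≤ n := by
    rcases le_total q.1 q.2 with h | h
    · exact ⟨q.1, q.2, h, rfl, rfl, rfl, hq2⟩
    · exact ⟨q.2, q.1, h, mul_comm _ _, by omega, by ring, hq1⟩
  rw [hPij, hPkl]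
  have hik : i ≤ k := le_min_of_prod hij hkl (by omega) (by omega)
  have hchain := Pp_chain ha hb hc hd hlt hn (k - i) k l (by omega) hkl (by omega)
  have e1 : k - (k - i) = i := by omega
  have e2 : l + (k - i) = j := by omega
  rw [e1, e2] at hchain
  exact hchain

end

noncomputable def betaR (n : ℕ) (p : ℕ × ℕ) : ℝ :=
  (p.1:ℝ)*((p.1:ℝ)-1)*((n:ℝ)-p.2)*((n:ℝ)-p.2-1) - (p.1:ℝ)*((n:ℝ)-p.1)*(p.2:ℝ)*((n:ℝ)-p.2)

noncomputable def bR (n : ℕ) (p : ℕ × ℕ) : ℝ :=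
  (n:ℝ)*((p.1+p.2:ℕ):ℝ)*(((p.1+p.2:ℕ):ℝ)-1) - (4*(n:ℝ)-2)*(p.1:ℝ)*(p.2:ℝ)

noncomputable def cC (n : ℕ) (p : ℕ × ℕ) : ℝ := (n.choose p.1 : ℝ) * (n.choose p.2 : ℝ)

noncomputable def Wp (a b c d : ℝ) (n : ℕ) (p : ℕ × ℕ) : ℝ :=
  Pp a b c d n p.1 * Pp a b c d n p.2

def Phis (n s : ℕ) : Finset (ℕ × ℕ) :=
  (Finset.range (n+1) ×ˢ Finset.range (n+1)).filter (fun p => p.1 + p.2 = s)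

section
variable {a b c d : ℝ} {n : ℕ}

lemma mem_Phis {s : ℕ} {p : ℕ × ℕ} :
    p ∈ Phis n s ↔ p.1 ≤ n ∧ p.2 ≤ n ∧ p.1 + p.2 = s := by
  simp only [Phis, Finset.mem_filter, Finset.mem_product, Finset.mem_range]
  omega

lemma betaR_add_swap (p : ℕ × ℕ) :
    betaR n p + betaR n p.swap = ((n:ℝ) - 1) * bR n p := by
  simp only [betaR, bR, Prod.fst_swap, Prod.snd_swap]
  push_cast
  ring

lemma sum_bc_zero (hn : 2 ≤ n) (s : ℕ) :
    ∑ p ∈ Phis n s, bR n p * cC n p = 0 := by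
  have hsub : Phis n s ⊆ Finset.HasAntidiagonal.antidiagonal s := by
    intro p hp
    rw [Finset.HasAntidiagonal.mem_antidiagonal]
    exact (mem_Phis.1 hp).2.2
  have hext : ∑ p ∈ Phis n s, bR n p * cC n p
      = ∑ p ∈ Finset.HasAntidiagonal.antidiagonal s, bR n p * cC n p := by
    refine Finset.sum_subset hsub fun p hp hnp => ?_
    have hps : p.1 + p.2 = s := Finset.HasAntidiagonal.mem_antidiagonal.1 hp
    have : n < p.1 ∨ n < p.2 := by
      by_contra hcon
      push_neg at hcon
      exact hnp (mem_Phis.2 ⟨hcon.1, hcon.2, hps⟩)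
    have : cC n p = 0 := by
      rcases this with h | h <;>
        simp [cC, Nat.choose_eq_zero_of_lt h]
    rw [this, mul_zero]
  rw [hext]
  have := bin_id (n := n) (by omega) s
  rw [← this]
  refine Finset.sum_congr rfl fun p hp => ?_
  have hps : p.1 + p.2 = s := Finset.HasAntidiagonal.mem_antidiagonal.1 hp
  simp only [bR, cC, hps]
  ring

lemma pair_nonneg (ha : 0 < a) (hb : 0 < b) (hc : 0 < c) (hd : 0 < d)
    (hlt : b * c < a * d) (hn : 2 ≤ n) {s : ℕ} {p q : ℕ × ℕ}
    (hp : p ∈ Phis n s) (hq : q ∈ Phis n s) :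
    0 ≤ cC n p * cC n q * (bR n p - bR n q) * (Wp a b c d n p - Wp a b c d n q) := by
  obtain ⟨hp1, hp2, hps⟩ := mem_Phis.1 hp
  obtain ⟨hq1, hq2, hqs⟩ := mem_Phis.1 hq
  have hcc : 0 ≤ cC n p * cC n q := by
    have : (0:ℝ) ≤ cC n p := mul_nonneg (Nat.cast_nonneg _) (Nat.cast_nonneg _)
    have h2 : (0:ℝ) ≤ cC n q := mul_nonneg (Nat.cast_nonneg _) (Nat.cast_nonneg _)
    exact mul_nonneg this h2
  have hsum : p.1 + p.2 = q.1 + q.2 := by omega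
  have hcast : ((p.1 + p.2 : ℕ) : ℝ) = ((q.1 + q.2 : ℕ) : ℝ) := by exact_mod_cast hsum
  have h42 : (0:ℝ) ≤ 4*(n:ℝ) - 2 := by
    have : (2:ℝ) ≤ (n:ℝ) := by exact_mod_cast hn
    linarith
  rcases le_total (p.1 * p.2) (q.1 * q.2) with hprod | hprod
  · have hbb : bR n q ≤ bR n p := by
      simp only [bR, hcast]
      have : ((p.1 * p.2 : ℕ):ℝ) ≤ ((q.1 * q.2 : ℕ):ℝ) := by exact_mod_cast hprod
      push_cast at this
      nlinarith
    have hww : Wp a b c d n q ≤ Wp a b c d n p :=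
      Pp_compare ha hb hc hd hlt hn hp1 hp2 hq1 hq2 hsum hprod
    exact mul_nonneg (mul_nonneg hcc (by linarith)) (by linarith)
  · have hbb : bR n p ≤ bR n q := by
      simp only [bR, hcast]
      have : ((q.1 * q.2 : ℕ):ℝ) ≤ ((p.1 * p.2 : ℕ):ℝ) := by exact_mod_cast hprod
      push_cast at this
      nlinarith
    have hww : Wp a b c d n p ≤ Wp a b c d n q :=
      Pp_compare ha hb hc hd hlt hn hq1 hq2 hp1 hp2 hsum.symm hprod
    have h1 : bR n p - bR n q ≤ 0 := by linarith
    have h2 : Wp a b c d n p - Wp a b c d n q ≤ 0 := by linarith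
    calc (0:ℝ) ≤ (cC n p * cC n q) * ((bR n q - bR n p) * (Wp a b c d n q - Wp a b c d n p)) :=
          mul_nonneg hcc (mul_nonneg (by linarith) (by linarith))
      _ = cC n p * cC n q * (bR n p - bR n q) * (Wp a b c d n p - Wp a b c d n q) := by ring

lemma chebyshev (ha : 0 < a) (hb : 0 < b) (hc : 0 < c) (hd : 0 < d)
    (hlt : b * c < a * d) (hn : 2 ≤ n) (s : ℕ) :
    0 ≤ ∑ p ∈ Phis n s, bR n p * (cC n p * Wp a b c d n p) := by
  set Φ := Phis n s with hΦ
  set s0 := ∑ p ∈ Φ, cC n p with hs0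
  set s1 := ∑ p ∈ Φ, bR n p * cC n p with hs1
  set s2 := ∑ p ∈ Φ, cC n p * Wp a b c d n p with hs2
  set s3 := ∑ p ∈ Φ, bR n p * (cC n p * Wp a b c d n p) with hs3
  have key : ∑ p ∈ Φ, ∑ q ∈ Φ,
      cC n p * cC n q * (bR n p - bR n q) * (Wp a b c d n p - Wp a b c d n q)
      = 2 * s0 * s3 - 2 * s1 * s2 := by
    have inner : ∀ p ∈ Φ, ∑ q ∈ Φ,
        cC n p * cC n q * (bR n p - bR n q) * (Wp a b c d n p - Wp a b c d n q)
        = (cC n p * bR n p * Wp a b c d n p) * s0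
          - (cC n p * bR n p) * s2 - (cC n p * Wp a b c d n p) * s1
          + cC n p * s3 := by
      intro p _
      have expand : ∀ q ∈ Φ,
          cC n p * cC n q * (bR n p - bR n q) * (Wp a b c d n p - Wp a b c d n q)
          = (cC n p * bR n p * Wp a b c d n p) * cC n q
            - (cC n p * bR n p) * (cC n q * Wp a b c d n q)
            - (cC n p * Wp a b c d n p) * (bR n q * cC n q)
            + cC n p * (bR n q * (cC n q * Wp a b c d n q)) := by
        intro q _; ring
      rw [Finset.sum_congr rfl expand]
      rw [Finset.sum_add_distrib, Finset.sum_sub_distrib, Finset.sum_sub_distrib,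
        ← Finset.mul_sum, ← Finset.mul_sum, ← Finset.mul_sum, ← Finset.mul_sum]
    rw [Finset.sum_congr rfl inner]
    rw [Finset.sum_add_distrib, Finset.sum_sub_distrib, Finset.sum_sub_distrib,
      ← Finset.sum_mul, ← Finset.sum_mul, ← Finset.sum_mul, ← Finset.sum_mul]
    have e1 : ∑ p ∈ Φ, cC n p * bR n p * Wp a b c d n p = s3 := by
      rw [hs3]; exact Finset.sum_congr rfl fun p _ => by ring
    have e2 : ∑ p ∈ Φ, cC n p * bR n p = s1 := by
      rw [hs1]; exact Finset.sum_congr rfl fun p _ => by ring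
    have e3 : ∑ p ∈ Φ, cC n p * Wp a b c d n p = s2 := rfl
    rw [e1, e2, e3]
    ring
  have hpairs : 0 ≤ ∑ p ∈ Φ, ∑ q ∈ Φ,
      cC n p * cC n q * (bR n p - bR n q) * (Wp a b c d n p - Wp a b c d n q) := by
    refine Finset.sum_nonneg fun p hp => Finset.sum_nonneg fun q hq => ?_
    exact pair_nonneg ha hb hc hd hlt hn hp hq
  have hs1z : s1 = 0 := sum_bc_zero hn s
  rw [key, hs1z] at hpairs
  have hs0nn : 0 ≤ s0 := by
    refine Finset.sum_nonneg fun p _ => ?_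
    exact mul_nonneg (Nat.cast_nonneg _) (Nat.cast_nonneg _)
  rcases eq_or_lt_of_le hs0nn with h0 | h0
  · -- all cC vanish on Φ
    have hall : ∀ p ∈ Φ, cC n p = 0 := by
      intro p hp
      have := (Finset.sum_eq_zero_iff_of_nonneg
        (fun q _ => mul_nonneg (Nat.cast_nonneg _) (Nat.cast_nonneg _))).1 h0.symm
      exact this p hp
    refine le_of_eq (Finset.sum_eq_zero fun p hp => ?_).symm
    rw [hall p hp]
    ring
  · nlinarith [hpairs]
end

section
variable {a b c d : ℝ} {n : ℕ}

lemma fiber_nonneg (ha : 0 < a) (hb : 0 < b) (hc : 0 < c) (hd : 0 < d)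
    (hlt : b * c < a * d) (hn : 2 ≤ n) (s : ℕ) :
    0 ≤ ∑ p ∈ Phis n s, betaR n p * (ajn a b c d n p.1 * ajn a b c d n p.2) := by
  have hAA : ∀ p : ℕ × ℕ, ajn a b c d n p.1 * ajn a b c d n p.2 = cC n p * Wp a b c d n p := by
    intro p
    rw [ajn_eq, ajn_eq, ajn', ajn', cC, Wp]
    ring
  have hswap : ∑ p ∈ Phis n s, betaR n p * (ajn a b c d n p.1 * ajn a b c d n p.2)
      = ∑ p ∈ Phis n s, betaR n p.swap * (ajn a b c d n p.1 * ajn a b c d n p.2) := by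
    refine Finset.sum_nbij' (fun p => p.swap) (fun p => p.swap) ?_ ?_ ?_ ?_ ?_
    · intro p hp
      obtain ⟨h1, h2, h3⟩ := mem_Phis.1 hp
      rw [mem_Phis]
      simp only [Prod.fst_swap, Prod.snd_swap]
      omega
    · intro p hp
      obtain ⟨h1, h2, h3⟩ := mem_Phis.1 hp
      rw [mem_Phis]
      simp only [Prod.fst_swap, Prod.snd_swap]
      omega
    · intro p _; simp
    · intro p _; simp
    · intro p _
      simp only [Prod.swap_swap, Prod.fst_swap, Prod.snd_swap]
      ring
  have h2S : 2 * ∑ p ∈ Phis n s, betaR n p * (ajn a b c d n p.1 * ajn a b c d n p.2)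
      = ((n:ℝ) - 1) * ∑ p ∈ Phis n s, bR n p * (cC n p * Wp a b c d n p) := by
    rw [two_mul]
    nth_rewrite 2 [hswap]
    rw [← Finset.sum_add_distrib, Finset.mul_sum]
    refine Finset.sum_congr rfl fun p _ => ?_
    have hid := betaR_add_swap (n := n) p
    rw [hAA p]
    linear_combination (cC n p * Wp a b c d n p) * hid
  have hcheb := chebyshev ha hb hc hd hlt hn (s := s)
  have hn1 : (0:ℝ) ≤ (n:ℝ) - 1 := by
    have : (2:ℝ) ≤ (n:ℝ) := by exact_mod_cast hn
    linarith
  nlinarith [mul_nonneg hn1 hcheb]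

lemma Phis_two (hn : 2 ≤ n) : Phis n 2 = {(0,2),(1,1),(2,0)} := by
  ext p
  simp only [mem_Phis, Finset.mem_insert, Finset.mem_singleton, Prod.ext_iff]
  omega

lemma fiber_two (ha : 0 < a) (hb : 0 < b) (hc : 0 < c) (hd : 0 < d)
    (hlt : b * c < a * d) (hn : 2 ≤ n) :
    ∑ p ∈ Phis n 2, betaR n p * (ajn a b c d n p.1 * ajn a b c d n p.2)
      = (n:ℝ)^2 * ((n:ℝ)-1)^2 * rho a b c d n 0 * (rho a b c d n 1 - rho a b c d n 0) := by
  rw [Phis_two hn]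
  rw [Finset.sum_insert (by decide), Finset.sum_insert (by decide), Finset.sum_singleton]
  have hA0 : ajn a b c d n 0 = 1 := by
    rw [ajn_eq, ajn', Pp]
    simp
  have hA1 : ajn a b c d n 1 = (n:ℝ) * rho a b c d n 0 := by
    rw [ajn_eq, ajn', Pp]
    simp [Finset.prod_range_one, Nat.choose_one_right]
  have hA2 : ajn a b c d n 2 = ((n:ℝ) * ((n:ℝ)-1) / 2) * (rho a b c d n 0 * rho a b c d n 1) := by
    rw [ajn_eq, ajn', Pp, Finset.prod_range_succ, Finset.prod_range_one]
    rw [Nat.cast_choose_two]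
  rw [hA0, hA1, hA2]
  simp only [betaR]
  push_cast
  ring

lemma fiber_two_pos (ha : 0 < a) (hb : 0 < b) (hc : 0 < c) (hd : 0 < d)
    (hlt : b * c < a * d) (hn : 2 ≤ n) :
    0 < (n:ℝ)^2 * ((n:ℝ)-1)^2 * rho a b c d n 0 * (rho a b c d n 1 - rho a b c d n 0) := by
  have h1 : 0 < rho a b c d n 0 := rho_pos ha hb hc hd hn (by omega)
  have h2 : rho a b c d n 0 < rho a b c d n 1 :=
    rho_lt ha hb hc hd hlt hn (by omega) (by omega)
  have hN : (2:ℝ) ≤ (n:ℝ) := by exact_mod_cast hn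
  have h3 : (0:ℝ) < (n:ℝ)^2 * ((n:ℝ)-1)^2 := by nlinarith
  exact mul_pos (mul_pos h3 h1) (by linarith)

end

noncomputable def UU (a b c d : ℝ) (n : ℕ) (x y : ℝ) : ℝ :=
  ∑ j ∈ Finset.range (n+1), (j:ℝ) * ((j:ℝ)-1) * ajn a b c d n j * x^j * y^(n-j)

noncomputable def VV (a b c d : ℝ) (n : ℕ) (x y : ℝ) : ℝ :=
  ∑ j ∈ Finset.range (n+1), (j:ℝ) * ((n:ℝ)-j) * ajn a b c d n j * x^j * y^(n-j)

noncomputable def WW (a b c d : ℝ) (n : ℕ) (x y : ℝ) : ℝ :=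
  ∑ j ∈ Finset.range (n+1), ((n:ℝ)-j) * ((n:ℝ)-j-1) * ajn a b c d n j * x^j * y^(n-j)

section
variable {a b c d : ℝ} {n : ℕ}

lemma UW_expand (x y : ℝ) :
    UU a b c d n x y * WW a b c d n x y - VV a b c d n x y ^ 2
      = ∑ p ∈ Finset.range (n+1) ×ˢ Finset.range (n+1),
          betaR n p * (ajn a b c d n p.1 * ajn a b c d n p.2)
            * (x^(p.1+p.2) * y^((n-p.1)+(n-p.2))) := by
  rw [UU, WW, VV, pow_two, Finset.sum_mul_sum, Finset.sum_mul_sum, ← Finset.sum_sub_distrib,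
    Finset.sum_product]
  refine Finset.sum_congr rfl fun i _ => ?_
  rw [← Finset.sum_sub_distrib]
  refine Finset.sum_congr rfl fun j _ => ?_
  simp only [betaR]
  rw [pow_add, pow_add]
  ring

lemma sum_fibers (x y : ℝ) :
    ∑ p ∈ Finset.range (n+1) ×ˢ Finset.range (n+1),
        betaR n p * (ajn a b c d n p.1 * ajn a b c d n p.2)
          * (x^(p.1+p.2) * y^((n-p.1)+(n-p.2)))
      = ∑ s ∈ Finset.range (2*n+1),
          (∑ p ∈ Phis n s, betaR n p * (ajn a b c d n p.1 * ajn a b c d n p.2))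
            * (x^s * y^(2*n-s)) := by
  rw [← Finset.sum_fiberwise_of_maps_to (g := fun p : ℕ × ℕ => p.1 + p.2)
    (t := Finset.range (2*n+1)) ?hmap]
  case hmap =>
    intro p hp
    simp only [Finset.mem_product, Finset.mem_range] at hp
    simp only [Finset.mem_range]
    omega
  refine Finset.sum_congr rfl fun s _ => ?_
  have hfe : (Finset.range (n+1) ×ˢ Finset.range (n+1)).filter
      (fun p : ℕ × ℕ => p.1 + p.2 = s) = Phis n s := rfl
  rw [hfe, Finset.sum_mul]
  refine Finset.sum_congr rfl fun p hp => ?_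
  obtain ⟨h1, h2, h3⟩ := mem_Phis.1 hp
  have e1 : p.1 + p.2 = s := h3
  have e2 : (n - p.1) + (n - p.2) = 2*n - s := by omega
  rw [e1, e2]

lemma main_ineq (ha : 0 < a) (hb : 0 < b) (hc : 0 < c) (hd : 0 < d)
    (hlt : b * c < a * d) (hn : 2 ≤ n) (x y : ℝ) (hx : 0 ≤ x) (hy : 0 ≤ y) :
    ((n:ℝ)^2 * ((n:ℝ)-1)^2 * rho a b c d n 0 * (rho a b c d n 1 - rho a b c d n 0))
        * (x^2 * y^(2*n-2))
      ≤ UU a b c d n x y * WW a b c d n x y - VV a b c d n x y ^ 2 := by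
  rw [UW_expand, sum_fibers]
  have h2mem : 2 ∈ Finset.range (2*n+1) := by
    simp only [Finset.mem_range]; omega
  have hterm : ∀ s ∈ Finset.range (2*n+1),
      0 ≤ (∑ p ∈ Phis n s, betaR n p * (ajn a b c d n p.1 * ajn a b c d n p.2))
        * (x^s * y^(2*n-s)) := by
    intro s _
    exact mul_nonneg (fiber_nonneg ha hb hc hd hlt hn s)
      (mul_nonneg (pow_nonneg hx _) (pow_nonneg hy _))
  have := Finset.single_le_sum hterm h2mem
  rw [fiber_two ha hb hc hd hlt hn] at this
  exact this

end

noncomputable def uu (a b c d : ℝ) (n : ℕ) (x y : ℝ) : ℝ :=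
  ∑ j ∈ Finset.range (n+1), (j:ℝ) * ((j:ℝ)-1) * ajn a b c d n j * x^(j-2) * y^(n-j)

noncomputable def vv (a b c d : ℝ) (n : ℕ) (x y : ℝ) : ℝ :=
  ∑ j ∈ Finset.range (n+1), (j:ℝ) * ((n:ℝ)-j) * ajn a b c d n j * x^(j-1) * y^(n-j-1)

noncomputable def ww (a b c d : ℝ) (n : ℕ) (x y : ℝ) : ℝ :=
  ∑ j ∈ Finset.range (n+1), ((n:ℝ)-j) * ((n:ℝ)-j-1) * ajn a b c d n j * x^j * y^(n-j-2)

section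
variable {a b c d : ℝ} {n : ℕ}

lemma pd1_Phi (x y : ℝ) : pd1 (Phi a b c d n) x y
    = ∑ j ∈ Finset.range (n+1), ajn a b c d n j * ((j:ℝ) * x^(j-1)) * y^(n-j) := by
  rw [pd1]
  rw [show (fun t => Phi a b c d n t y)
      = (fun t => ∑ j ∈ Finset.range (n+1), ajn a b c d n j * t^j * y^(n-j)) from rfl]
  rw [deriv_fun_sum (fun j _ => by fun_prop)]
  refine Finset.sum_congr rfl fun j _ => ?_
  rw [deriv_mul_const_field, deriv_const_mul_field, deriv_pow_field]

lemma pd2_Phi (x y : ℝ) : pd2 (Phi a b c d n) x y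
    = ∑ j ∈ Finset.range (n+1), ajn a b c d n j * x^j * (((n-j:ℕ):ℝ) * y^(n-j-1)) := by
  rw [pd2]
  rw [show (fun t => Phi a b c d n x t)
      = (fun t => ∑ j ∈ Finset.range (n+1), ajn a b c d n j * x^j * t^(n-j)) from rfl]
  rw [deriv_fun_sum (fun j _ => by fun_prop)]
  refine Finset.sum_congr rfl fun j _ => ?_
  rw [deriv_const_mul_field, deriv_pow_field]

lemma hess00 (x y : ℝ) : pd1 (pd1 (Phi a b c d n)) x y = uu a b c d n x y := by
  rw [pd1]
  rw [show (fun t => pd1 (Phi a b c d n) t y)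
      = (fun t => ∑ j ∈ Finset.range (n+1), ajn a b c d n j * ((j:ℝ) * t^(j-1)) * y^(n-j))
      from funext fun t => pd1_Phi t y]
  rw [deriv_fun_sum (fun j _ => by fun_prop), uu]
  refine Finset.sum_congr rfl fun j _ => ?_
  rw [deriv_mul_const_field]
  rw [show (fun t:ℝ => ajn a b c d n j * ((j:ℝ) * t^(j-1)))
      = (fun t:ℝ => (ajn a b c d n j * (j:ℝ)) * t^(j-1)) from funext fun t => by ring]
  rw [deriv_const_mul_field, deriv_pow_field]
  rcases j with _|j
  · simp
  · have e1 : j + 1 - 1 = j := by omega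
    have e2 : j + 1 - 2 = j - 1 := by omega
    rw [e1, e2]
    rcases j with _|j
    · simp
    · have e3 : j + 1 - 1 = j := by omega
      rw [e3]
      push_cast
      ring

lemma hess01 (x y : ℝ) : pd1 (pd2 (Phi a b c d n)) x y = vv a b c d n x y := by
  rw [pd1]
  rw [show (fun t => pd2 (Phi a b c d n) t y)
      = (fun t => ∑ j ∈ Finset.range (n+1), ajn a b c d n j * t^j * (((n-j:ℕ):ℝ) * y^(n-j-1)))
      from funext fun t => pd2_Phi t y]
  rw [deriv_fun_sum (fun j _ => by fun_prop), vv]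
  refine Finset.sum_congr rfl fun j hj => ?_
  rw [deriv_mul_const_field, deriv_const_mul_field, deriv_pow_field]
  have hjn : j ≤ n := by
    have := Finset.mem_range.1 hj; omega
  have : ((n-j:ℕ):ℝ) = (n:ℝ) - j := by
    rw [Nat.cast_sub hjn]
  rw [this]
  ring

lemma hess10 (x y : ℝ) : pd2 (pd1 (Phi a b c d n)) x y = vv a b c d n x y := by
  rw [pd2]
  rw [show (fun t => pd1 (Phi a b c d n) x t)
      = (fun t => ∑ j ∈ Finset.range (n+1), (ajn a b c d n j * ((j:ℝ) * x^(j-1))) * t^(n-j))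
      from funext fun t => pd1_Phi x t]
  rw [deriv_fun_sum (fun j _ => by fun_prop), vv]
  refine Finset.sum_congr rfl fun j hj => ?_
  rw [deriv_const_mul_field, deriv_pow_field]
  have hjn : j ≤ n := by
    have := Finset.mem_range.1 hj; omega
  have : ((n-j:ℕ):ℝ) = (n:ℝ) - j := by
    rw [Nat.cast_sub hjn]
  rw [this]
  ring

lemma hess11 (x y : ℝ) : pd2 (pd2 (Phi a b c d n)) x y = ww a b c d n x y := by
  rw [pd2]
  rw [show (fun t => pd2 (Phi a b c d n) x t)
      = (fun t => ∑ j ∈ Finset.range (n+1),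
          (ajn a b c d n j * x^j * ((n-j:ℕ):ℝ)) * t^(n-j-1))
      from funext fun t => by
        rw [pd2_Phi x t]
        exact Finset.sum_congr rfl fun j _ => by ring]
  rw [deriv_fun_sum (fun j _ => by fun_prop), ww]
  refine Finset.sum_congr rfl fun j hj => ?_
  rw [deriv_const_mul_field, deriv_pow_field]
  have hjn : j ≤ n := by
    have := Finset.mem_range.1 hj; omega
  rcases eq_or_lt_of_le hjn with he | hlt
  · subst he
    simp
  · have h1 : ((n-j:ℕ):ℝ) = (n:ℝ) - j := by rw [Nat.cast_sub hjn]
    have h2 : ((n-j-1:ℕ):ℝ) = (n:ℝ) - j - 1 := by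
      have : n - j - 1 = n - (j+1) := by omega
      rw [this, Nat.cast_sub (by omega)]
      push_cast
      ring
    have h3 : n - j - 1 - 1 = n - j - 2 := by omega
    rw [h1, h2, h3]
    ring

end

section
variable {a b c d : ℝ} {n : ℕ}

-- Shifted representations of the sums, dropping terms with vanishing coefficients.

lemma uu_shift (hn : 2 ≤ n) (x y : ℝ) : uu a b c d n x y
    = ∑ i ∈ Finset.range (n-1),
        ((i:ℝ)+2) * ((i:ℝ)+1) * ajn a b c d n (i+2) * x^i * y^(n-(i+2)) := by
  rw [uu, show n+1 = (n-1)+1+1 from by omega, Finset.sum_range_succ', Finset.sum_range_succ']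
  norm_num
  refine Finset.sum_congr rfl fun i _ => ?_
  simp only [show ∀ i:ℕ, i+1+1 = i+2 from fun i => rfl]
  push_cast
  ring

lemma UU_shift (hn : 2 ≤ n) (x y : ℝ) : UU a b c d n x y
    = ∑ i ∈ Finset.range (n-1),
        ((i:ℝ)+2) * ((i:ℝ)+1) * ajn a b c d n (i+2) * x^(i+2) * y^(n-(i+2)) := by
  rw [UU, show n+1 = (n-1)+1+1 from by omega, Finset.sum_range_succ', Finset.sum_range_succ']
  norm_num
  refine Finset.sum_congr rfl fun i _ => ?_
  simp only [show ∀ i:ℕ, i+1+1 = i+2 from fun i => rfl]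
  push_cast
  ring

lemma vv_shift (hn : 2 ≤ n) (x y : ℝ) : vv a b c d n x y
    = ∑ i ∈ Finset.range (n-1),
        ((i:ℝ)+1) * ((n:ℝ)-(i+1)) * ajn a b c d n (i+1) * x^i * y^(n-(i+1)-1) := by
  rw [vv, show n+1 = (n-1)+1+1 from by omega, Finset.sum_range_succ, Finset.sum_range_succ']
  have htop : ((((n-1)+1 : ℕ)):ℝ) * ((n:ℝ)-(((n-1)+1 : ℕ):ℝ)) * ajn a b c d n ((n-1)+1)
      * x^((n-1)+1-1) * y^(n-((n-1)+1)-1) = 0 := by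
    have : ((((n-1)+1 : ℕ)):ℝ) = (n:ℝ) := by
      have : (n-1)+1 = n := by omega
      rw [this]
    rw [this, sub_self]
    ring
  rw [htop]
  norm_num

lemma VV_shift (hn : 2 ≤ n) (x y : ℝ) : VV a b c d n x y
    = ∑ i ∈ Finset.range (n-1),
        ((i:ℝ)+1) * ((n:ℝ)-(i+1)) * ajn a b c d n (i+1) * x^(i+1) * y^(n-(i+1)) := by
  rw [VV, show n+1 = (n-1)+1+1 from by omega, Finset.sum_range_succ, Finset.sum_range_succ']
  have htop : ((((n-1)+1 : ℕ)):ℝ) * ((n:ℝ)-(((n-1)+1 : ℕ):ℝ)) * ajn a b c d n ((n-1)+1)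
      * x^((n-1)+1) * y^(n-((n-1)+1)) = 0 := by
    have : ((((n-1)+1 : ℕ)):ℝ) = (n:ℝ) := by
      have : (n-1)+1 = n := by omega
      rw [this]
    rw [this, sub_self]
    ring
  rw [htop]
  norm_num

lemma ww_shift (hn : 2 ≤ n) (x y : ℝ) : ww a b c d n x y
    = ∑ i ∈ Finset.range (n-1),
        ((n:ℝ)-i) * ((n:ℝ)-i-1) * ajn a b c d n i * x^i * y^(n-i-2) := by
  rw [ww, show n+1 = (n-1)+1+1 from by omega, Finset.sum_range_succ, Finset.sum_range_succ]
  have hc1 : ((n-1:ℕ):ℝ) = (n:ℝ) - 1 := by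
    rw [Nat.cast_sub (by omega)]
    norm_num
  have htop1 : ((n:ℝ)-(((n-1)+1:ℕ):ℝ)) * ((n:ℝ)-(((n-1)+1:ℕ):ℝ)-1) * ajn a b c d n ((n-1)+1)
      * x^((n-1)+1) * y^(n-((n-1)+1)-2) = 0 := by
    have : ((((n-1)+1 : ℕ)):ℝ) = (n:ℝ) := by
      have : (n-1)+1 = n := by omega
      rw [this]
    rw [this, sub_self]
    ring
  have htop2 : ((n:ℝ)-((n-1:ℕ):ℝ)) * ((n:ℝ)-((n-1:ℕ):ℝ)-1) * ajn a b c d n (n-1)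
      * x^(n-1) * y^(n-(n-1)-2) = 0 := by
    rw [hc1]
    ring_nf
  rw [htop1, htop2]
  norm_num

lemma WW_shift (hn : 2 ≤ n) (x y : ℝ) : WW a b c d n x y
    = ∑ i ∈ Finset.range (n-1),
        ((n:ℝ)-i) * ((n:ℝ)-i-1) * ajn a b c d n i * x^i * y^(n-i) := by
  rw [WW, show n+1 = (n-1)+1+1 from by omega, Finset.sum_range_succ, Finset.sum_range_succ]
  have hc1 : ((n-1:ℕ):ℝ) = (n:ℝ) - 1 := by
    rw [Nat.cast_sub (by omega)]
    norm_num
  have htop1 : ((n:ℝ)-(((n-1)+1:ℕ):ℝ)) * ((n:ℝ)-(((n-1)+1:ℕ):ℝ)-1) * ajn a b c d n ((n-1)+1)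
      * x^((n-1)+1) * y^(n-((n-1)+1)) = 0 := by
    have : ((((n-1)+1 : ℕ)):ℝ) = (n:ℝ) := by
      have : (n-1)+1 = n := by omega
      rw [this]
    rw [this, sub_self]
    ring
  have htop2 : ((n:ℝ)-((n-1:ℕ):ℝ)) * ((n:ℝ)-((n-1:ℕ):ℝ)-1) * ajn a b c d n (n-1)
      * x^(n-1) * y^(n-(n-1)) = 0 := by
    rw [hc1]
    ring_nf
  rw [htop1, htop2]
  norm_num

-- Bridges between pointwise second derivatives and the clean polynomial sums.

lemma xx_uu (hn : 2 ≤ n) (x y : ℝ) :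
    x^2 * uu a b c d n x y = UU a b c d n x y := by
  rw [uu_shift hn, UU_shift hn, Finset.mul_sum]
  refine Finset.sum_congr rfl fun i _ => ?_
  ring

lemma xy_vv (hn : 2 ≤ n) (x y : ℝ) :
    x * y * vv a b c d n x y = VV a b c d n x y := by
  rw [vv_shift hn, VV_shift hn, Finset.mul_sum]
  refine Finset.sum_congr rfl fun i hi => ?_
  have hi' : i < n - 1 := Finset.mem_range.1 hi
  have e : n-(i+1)-1+1 = n-(i+1) := by omega
  calc x * y * (((i:ℝ)+1) * ((n:ℝ)-(i+1)) * ajn a b c d n (i+1) * x^i * y^(n-(i+1)-1))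
      = ((i:ℝ)+1) * ((n:ℝ)-(i+1)) * ajn a b c d n (i+1) * (x^i*x) * (y^(n-(i+1)-1)*y) := by ring
    _ = ((i:ℝ)+1) * ((n:ℝ)-(i+1)) * ajn a b c d n (i+1) * x^(i+1) * y^(n-(i+1)-1+1) := by
        rw [pow_succ, pow_succ]
    _ = ((i:ℝ)+1) * ((n:ℝ)-(i+1)) * ajn a b c d n (i+1) * x^(i+1) * y^(n-(i+1)) := by rw [e]

lemma yy_ww (hn : 2 ≤ n) (x y : ℝ) :
    y^2 * ww a b c d n x y = WW a b c d n x y := by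
  rw [ww_shift hn, WW_shift hn, Finset.mul_sum]
  refine Finset.sum_congr rfl fun i hi => ?_
  have hi' : i < n - 1 := Finset.mem_range.1 hi
  have e : n-i-2+2 = n-i := by omega
  calc y^2 * (((n:ℝ)-i) * ((n:ℝ)-i-1) * ajn a b c d n i * x^i * y^(n-i-2))
      = ((n:ℝ)-i) * ((n:ℝ)-i-1) * ajn a b c d n i * x^i * (y^(n-i-2)*y^2) := by ring
    _ = ((n:ℝ)-i) * ((n:ℝ)-i-1) * ajn a b c d n i * x^i * y^(n-i-2+2) := by rw [← pow_add]
    _ = ((n:ℝ)-i) * ((n:ℝ)-i-1) * ajn a b c d n i * x^i * y^(n-i) := by rw [e]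

-- The symmetry identity.

lemma range_eq_succ (hn : 2 ≤ n) : Finset.range n = Finset.range ((n-1)+1) := by
  rw [Nat.sub_add_cancel (by omega)]

lemma sym_id (ha : 0 < a) (hb : 0 < b) (hc : 0 < c) (hd : 0 < d) (hn : 2 ≤ n) (x y : ℝ) :
    b * x * uu a b c d n x y + d * y * vv a b c d n x y
      = a * x * vv a b c d n x y + c * y * ww a b c d n x y := by
  have hcastn1 : ((n-1:ℕ):ℝ) = (n:ℝ) - 1 := by
    rw [Nat.cast_sub (by omega)]
    norm_num
  -- The two aligned sums related by the coefficient recursion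
  set L : ℕ → ℝ := fun j =>
    ((j:ℝ)+1) * (b*(j:ℝ) + d*((n:ℝ)-(j:ℝ)-1)) * ajn a b c d n (j+1) * x^j * y^(n-j-1) with hLdef
  set R : ℕ → ℝ := fun j =>
    ((n:ℝ)-(j:ℝ)) * (a*(j:ℝ) + c*((n:ℝ)-(j:ℝ)-1)) * ajn a b c d n j * x^j * y^(n-j-1) with hRdef
  have hLR : ∑ j ∈ Finset.range n, L j = ∑ j ∈ Finset.range n, R j := by
    refine Finset.sum_congr rfl fun j hj => ?_
    have hjn : j < n := Finset.mem_range.1 hj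
    have hrec := ajn_rec (a := a) (c := c) hb hd hn hjn
    simp only [hLdef, hRdef]
    linear_combination (x^j * y^(n-j-1)) * hrec
  -- decompose L
  have hLsplit : ∑ j ∈ Finset.range n, L j
      = (∑ j ∈ Finset.range n, ((j:ℝ)+1) * b * (j:ℝ) * ajn a b c d n (j+1) * x^j * y^(n-j-1))
      + (∑ j ∈ Finset.range n, ((j:ℝ)+1) * d * ((n:ℝ)-(j:ℝ)-1) * ajn a b c d n (j+1) * x^j * y^(n-j-1)) := by
    rw [← Finset.sum_add_distrib]
    exact Finset.sum_congr rfl fun j _ => by simp only [hLdef]; ring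
  have hRsplit : ∑ j ∈ Finset.range n, R j
      = (∑ j ∈ Finset.range n, ((n:ℝ)-(j:ℝ)) * a * (j:ℝ) * ajn a b c d n j * x^j * y^(n-j-1))
      + (∑ j ∈ Finset.range n, ((n:ℝ)-(j:ℝ)) * c * ((n:ℝ)-(j:ℝ)-1) * ajn a b c d n j * x^j * y^(n-j-1)) := by
    rw [← Finset.sum_add_distrib]
    exact Finset.sum_congr rfl fun j _ => by simp only [hRdef]; ring
  -- identify the four pieces
  have hbu : b * x * uu a b c d n x y
      = ∑ j ∈ Finset.range n, ((j:ℝ)+1) * b * (j:ℝ) * ajn a b c d n (j+1) * x^j * y^(n-j-1) := by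
    rw [uu_shift hn, Finset.mul_sum, range_eq_succ hn, Finset.sum_range_succ']
    norm_num
    refine Finset.sum_congr rfl fun i hi => ?_
    have hi' := Finset.mem_range.1 hi
    simp only [show ∀ m:ℕ, m+1+1 = m+2 from fun m => rfl]
    rw [show n-(i+1)-1 = n-(i+2) from by omega]
    push_cast
    calc b * x * ((((i:ℝ))+2) * ((i:ℝ)+1) * ajn a b c d n (i+2) * x^i * y^(n-(i+2)))
        = ((i:ℝ)+1+1) * b * ((i:ℝ)+1) * ajn a b c d n (i+2) * (x^i*x) * y^(n-(i+2)) := by ring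
      _ = ((i:ℝ)+1+1) * b * ((i:ℝ)+1) * ajn a b c d n (i+2) * x^(i+1) * y^(n-(i+2)) := by
          rw [pow_succ]
  have hdv : d * y * vv a b c d n x y
      = ∑ j ∈ Finset.range n, ((j:ℝ)+1) * d * ((n:ℝ)-(j:ℝ)-1) * ajn a b c d n (j+1) * x^j * y^(n-j-1) := by
    rw [vv_shift hn, Finset.mul_sum, range_eq_succ hn, Finset.sum_range_succ]
    have htop : (((n-1:ℕ):ℝ)+1) * d * ((n:ℝ)-((n-1:ℕ):ℝ)-1) * ajn a b c d n ((n-1)+1)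
        * x^(n-1) * y^(n-(n-1)-1) = 0 := by
      rw [hcastn1]
      ring_nf
    rw [htop, add_zero]
    refine Finset.sum_congr rfl fun i hi => ?_
    have hi' := Finset.mem_range.1 hi
    have e : n-i-2+1 = n-i-1 := by omega
    rw [show n-(i+1)-1 = n-i-2 from by omega, show n-i-1 = n-i-2+1 from by omega]
    push_cast
    calc d * y * (((i:ℝ)+1) * ((n:ℝ)-((i:ℝ)+1)) * ajn a b c d n (i+1) * x^i * y^(n-i-2))
        = ((i:ℝ)+1) * d * ((n:ℝ)-(i:ℝ)-1) * ajn a b c d n (i+1) * x^i * (y^(n-i-2)*y) := by ring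
      _ = ((i:ℝ)+1) * d * ((n:ℝ)-(i:ℝ)-1) * ajn a b c d n (i+1) * x^i * y^(n-i-2+1) := by
          rw [pow_succ]
  have hav : a * x * vv a b c d n x y
      = ∑ j ∈ Finset.range n, ((n:ℝ)-(j:ℝ)) * a * (j:ℝ) * ajn a b c d n j * x^j * y^(n-j-1) := by
    rw [vv_shift hn, Finset.mul_sum, range_eq_succ hn, Finset.sum_range_succ']
    norm_num
    refine Finset.sum_congr rfl fun i hi => ?_
    push_cast
    calc a * x * (((i:ℝ)+1) * ((n:ℝ)-((i:ℝ)+1)) * ajn a b c d n (i+1) * x^i * y^(n-(i+1)-1))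
        = ((n:ℝ)-((i:ℝ)+1)) * a * ((i:ℝ)+1) * ajn a b c d n (i+1) * (x^i*x) * y^(n-(i+1)-1) := by ring
      _ = ((n:ℝ)-((i:ℝ)+1)) * a * ((i:ℝ)+1) * ajn a b c d n (i+1) * x^(i+1) * y^(n-(i+1)-1) := by
          rw [pow_succ]
  have hcw : c * y * ww a b c d n x y
      = ∑ j ∈ Finset.range n, ((n:ℝ)-(j:ℝ)) * c * ((n:ℝ)-(j:ℝ)-1) * ajn a b c d n j * x^j * y^(n-j-1) := by
    rw [ww_shift hn, Finset.mul_sum, range_eq_succ hn, Finset.sum_range_succ]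
    have htop : ((n:ℝ)-((n-1:ℕ):ℝ)) * c * ((n:ℝ)-((n-1:ℕ):ℝ)-1) * ajn a b c d n (n-1)
        * x^(n-1) * y^(n-(n-1)-1) = 0 := by
      rw [hcastn1]
      ring_nf
    rw [htop, add_zero]
    refine Finset.sum_congr rfl fun i hi => ?_
    have hi' := Finset.mem_range.1 hi
    have e : n-i-2+1 = n-i-1 := by omega
    rw [show n-i-1 = n-i-2+1 from by omega]
    calc c * y * (((n:ℝ)-(i:ℝ)) * ((n:ℝ)-(i:ℝ)-1) * ajn a b c d n i * x^i * y^(n-i-2))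
        = ((n:ℝ)-(i:ℝ)) * c * ((n:ℝ)-(i:ℝ)-1) * ajn a b c d n i * x^i * (y^(n-i-2)*y) := by ring
      _ = ((n:ℝ)-(i:ℝ)) * c * ((n:ℝ)-(i:ℝ)-1) * ajn a b c d n i * x^i * y^(n-i-2+1) := by
          rw [pow_succ]
  rw [hbu, hdv, hav, hcw, ← hLsplit, ← hRsplit, hLR]

end

section
variable {a b c d : ℝ} {n : ℕ}

lemma uu_nonneg (ha : 0 < a) (hb : 0 < b) (hc : 0 < c) (hd : 0 < d) (hn : 2 ≤ n)
    {x y : ℝ} (hx : 0 ≤ x) (hy : 0 ≤ y) : 0 ≤ uu a b c d n x y := by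
  rw [uu_shift hn]
  refine Finset.sum_nonneg fun i hi => ?_
  have hajn := (ajn_pos ha hb hc hd hn (j := i+2) (by
    have := Finset.mem_range.1 hi; omega)).le
  positivity

lemma vv_nonneg (ha : 0 < a) (hb : 0 < b) (hc : 0 < c) (hd : 0 < d) (hn : 2 ≤ n)
    {x y : ℝ} (hx : 0 ≤ x) (hy : 0 ≤ y) : 0 ≤ vv a b c d n x y := by
  rw [vv_shift hn]
  refine Finset.sum_nonneg fun i hi => ?_
  have hi' := Finset.mem_range.1 hi
  have hajn := (ajn_pos ha hb hc hd hn (j := i+1) (by omega)).le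
  have hco : (0:ℝ) ≤ (n:ℝ) - ((i:ℝ)+1) := by
    have : ((i:ℝ)+1+1) ≤ (n:ℝ) := by exact_mod_cast (by omega : i+1+1 ≤ n)
    linarith
  have h1 : (0:ℝ) ≤ ((i:ℝ)+1) := by positivity
  have := mul_nonneg (mul_nonneg (mul_nonneg (mul_nonneg h1 hco) hajn)
    (pow_nonneg hx i)) (pow_nonneg hy (n-(i+1)-1))
  convert this using 2

lemma ww_nonneg (ha : 0 < a) (hb : 0 < b) (hc : 0 < c) (hd : 0 < d) (hn : 2 ≤ n)
    {x y : ℝ} (hx : 0 ≤ x) (hy : 0 ≤ y) : 0 ≤ ww a b c d n x y := by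
  rw [ww_shift hn]
  refine Finset.sum_nonneg fun i hi => ?_
  have hi' := Finset.mem_range.1 hi
  have hajn := (ajn_pos ha hb hc hd hn (j := i) (by omega)).le
  have hco : (0:ℝ) ≤ (n:ℝ) - (i:ℝ) - 1 := by
    have : ((i:ℝ)+1+1) ≤ (n:ℝ) := by exact_mod_cast (by omega : i+1+1 ≤ n)
    linarith
  have hco2 : (0:ℝ) ≤ (n:ℝ) - (i:ℝ) := by linarith
  exact mul_nonneg (mul_nonneg (mul_nonneg (mul_nonneg hco2 hco) hajn)
    (pow_nonneg hx i)) (pow_nonneg hy (n-i-2))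

lemma uu_pos (ha : 0 < a) (hb : 0 < b) (hc : 0 < c) (hd : 0 < d) (hn : 2 ≤ n)
    {x y : ℝ} (hx : 0 < x) (hy : 0 < y) : 0 < uu a b c d n x y := by
  rw [uu_shift hn]
  refine Finset.sum_pos (fun i hi => ?_) ⟨0, Finset.mem_range.2 (by omega)⟩
  have hi' := Finset.mem_range.1 hi
  have hajn := ajn_pos ha hb hc hd hn (j := i+2) (by omega)
  positivity

lemma det_pos (ha : 0 < a) (hb : 0 < b) (hc : 0 < c) (hd : 0 < d)
    (hlt : b * c < a * d) (hn : 2 ≤ n) {x y : ℝ} (hx : 0 < x) (hy : 0 < y) :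
    0 < uu a b c d n x y * ww a b c d n x y - vv a b c d n x y ^ 2 := by
  have h1 := main_ineq ha hb hc hd hlt hn x y hx.le hy.le
  have h2 : x^2*y^2*(uu a b c d n x y * ww a b c d n x y - vv a b c d n x y ^ 2)
      = UU a b c d n x y * WW a b c d n x y - VV a b c d n x y ^ 2 := by
    rw [← xx_uu hn, ← xy_vv hn, ← yy_ww hn]
    ring
  have hK := fiber_two_pos ha hb hc hd hlt hn
  have hmon : (0:ℝ) < x^2 * y^(2*n-2) := by positivity
  have hxy : (0:ℝ) < x^2*y^2 := by positivity
  nlinarith [mul_pos hK hmon]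

-- 2×2 matrix helpers

lemma isSymm_two {p q r s' : ℝ} (h : q = r) :
    (!![p, q; r, s'] : Matrix (Fin 2) (Fin 2) ℝ).IsSymm := by
  rw [Matrix.IsSymm]
  subst h
  ext i j
  fin_cases i <;> fin_cases j <;> simp

lemma isHermitian_two {p q r s' : ℝ} (h : q = r) :
    (!![p, q; r, s'] : Matrix (Fin 2) (Fin 2) ℝ).IsHermitian := by
  rw [Matrix.IsHermitian]
  subst h
  ext i j
  fin_cases i <;> fin_cases j <;> simp [Matrix.conjTranspose_apply]

lemma quad_eval (p q r s' : ℝ) (z : Fin 2 → ℝ) :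
    dotProduct (star z)
        (Matrix.mulVec (!![p, q; r, s'] : Matrix (Fin 2) (Fin 2) ℝ) z)
      = p*(z 0)^2 + (q+r)*(z 0)*(z 1) + s'*(z 1)^2 := by
  simp [Matrix.mulVec, dotProduct, Fin.sum_univ_two]
  ring

lemma posDef_two {p q s' : ℝ} (hp : 0 < p) (hdet : 0 < p*s' - q*q) :
    (!![p, q; q, s'] : Matrix (Fin 2) (Fin 2) ℝ).PosDef := by
  refine Matrix.posDef_iff_dotProduct_mulVec.2 ⟨isHermitian_two rfl, fun z hz => ?_⟩
  rw [quad_eval]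
  have hz' : z 0 ≠ 0 ∨ z 1 ≠ 0 := by
    by_contra hcon
    push_neg at hcon
    refine hz (funext fun i => ?_)
    fin_cases i
    · exact hcon.1
    · exact hcon.2
  rcases eq_or_ne (z 1) 0 with h1 | h1
  · have h0 : z 0 ≠ 0 := by
      rcases hz' with h | h
      · exact h
      · exact absurd h1 h
    rw [h1]
    have : 0 < (z 0)^2 := by positivity
    nlinarith
  · have h2 : 0 < (z 1)^2 := by positivity
    nlinarith [sq_nonneg (p*(z 0) + q*(z 1)), mul_pos hdet h2]

lemma posSemidef_two {p q s' : ℝ} (hp : 0 ≤ p) (hs : 0 ≤ s') (hdet : 0 ≤ p*s' - q*q) :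
    (!![p, q; q, s'] : Matrix (Fin 2) (Fin 2) ℝ).PosSemidef := by
  refine Matrix.posSemidef_iff_dotProduct_mulVec.2 ⟨isHermitian_two rfl, fun z => ?_⟩
  rw [quad_eval]
  rcases eq_or_lt_of_le hp with h0 | h0
  · have hq : q = 0 := by nlinarith
    rw [hq, ← h0]
    nlinarith [sq_nonneg (z 1)]
  · nlinarith [sq_nonneg (p*(z 0) + q*(z 1)), mul_nonneg hdet (sq_nonneg (z 1))]

lemma Hess_mul (x y : ℝ) :
    Hess (Phi a b c d n) x y * Mmat a b c d x y
      = !![uu a b c d n x y * (a*x) + vv a b c d n x y * (c*y),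
           uu a b c d n x y * (b*x) + vv a b c d n x y * (d*y);
           vv a b c d n x y * (a*x) + ww a b c d n x y * (c*y),
           vv a b c d n x y * (b*x) + ww a b c d n x y * (d*y)] := by
  have h1 : Hess (Phi a b c d n) x y
      = !![uu a b c d n x y, vv a b c d n x y; vv a b c d n x y, ww a b c d n x y] := by
    rw [Hess, hess00, hess01, hess10, hess11]
  rw [h1, Mmat, Matrix.mul_fin_two]

end

end SnAux

/-- `S_n(X)` is symmetric positive definite on `(0,∞)²` and positive semidefinite
on `[0,∞)²`. -/
theorem Sn_posDef (a b c d : ℝ) (ha : 0 < a) (hb : 0 < b) (hc : 0 < c) (hd : 0 < d)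
    (habcd : b * c < a * d) (n : ℕ) (hn : 2 ≤ n) :
    (∀ x y : ℝ, 0 < x → 0 < y →
      (Hess (Phi a b c d n) x y * Mmat a b c d x y).IsSymm ∧
        (Hess (Phi a b c d n) x y * Mmat a b c d x y).PosDef) ∧
    ∀ x y : ℝ, 0 ≤ x → 0 ≤ y →
      (Hess (Phi a b c d n) x y * Mmat a b c d x y).PosSemidef := by
  open SnAux in
  constructor
  · intro x y hx hy
    set u := uu a b c d n x y with hu
    set v := vv a b c d n x y with hv
    set w := ww a b c d n x y with hw
    have hsym : u * (b*x) + v * (d*y) = v * (a*x) + w * (c*y) := by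
      have := sym_id ha hb hc hd hn (a := a) (b := b) (c := c) (d := d) (x := x) (y := y)
      linarith [this]
    have hS : Hess (Phi a b c d n) x y * Mmat a b c d x y
        = !![u * (a*x) + v * (c*y), v * (a*x) + w * (c*y);
             v * (a*x) + w * (c*y), v * (b*x) + w * (d*y)] := by
      rw [Hess_mul, hsym]
    have hvnn : 0 ≤ v := vv_nonneg ha hb hc hd hn hx.le hy.le
    have hwnn : 0 ≤ w := ww_nonneg ha hb hc hd hn hx.le hy.le
    have hupos : 0 < u := uu_pos ha hb hc hd hn hx hy
    have h00 : 0 < u * (a*x) + v * (c*y) := by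
      have h1 : 0 < u * (a*x) := by positivity
      have h2 : 0 ≤ v * (c*y) := by positivity
      linarith
    have hdetv := det_pos ha hb hc hd habcd hn hx hy
    have hdet : 0 < (u * (a*x) + v * (c*y)) * (v * (b*x) + w * (d*y))
        - (v * (a*x) + w * (c*y)) * (v * (a*x) + w * (c*y)) := by
      have he : (u * (a*x) + v * (c*y)) * (v * (b*x) + w * (d*y))
          - (v * (a*x) + w * (c*y)) * (v * (a*x) + w * (c*y))
          = (a*d - b*c) * (x*y) * (u*w - v^2) := by
        linear_combination (v * (a*x) + w * (c*y)) * hsym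
      rw [he]
      have : 0 < a*d - b*c := by linarith
      positivity
    constructor
    · rw [hS]
      exact isSymm_two rfl
    · rw [hS]
      exact posDef_two h00 hdet
  · intro x y hx hy
    set u := uu a b c d n x y with hu
    set v := vv a b c d n x y with hv
    set w := ww a b c d n x y with hw
    have hsym : u * (b*x) + v * (d*y) = v * (a*x) + w * (c*y) := by
      have := sym_id ha hb hc hd hn (a := a) (b := b) (c := c) (d := d) (x := x) (y := y)
      linarith [this]
    have hS : Hess (Phi a b c d n) x y * Mmat a b c d x y
        = !![u * (a*x) + v * (c*y), v * (a*x) + w * (c*y);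
             v * (a*x) + w * (c*y), v * (b*x) + w * (d*y)] := by
      rw [Hess_mul, hsym]
    have hunn : 0 ≤ u := uu_nonneg ha hb hc hd hn hx hy
    have hvnn : 0 ≤ v := vv_nonneg ha hb hc hd hn hx hy
    have hwnn : 0 ≤ w := ww_nonneg ha hb hc hd hn hx hy
    have h00 : 0 ≤ u * (a*x) + v * (c*y) := by positivity
    have h11 : 0 ≤ v * (b*x) + w * (d*y) := by positivity
    have hdet : 0 ≤ (u * (a*x) + v * (c*y)) * (v * (b*x) + w * (d*y))
        - (v * (a*x) + w * (c*y)) * (v * (a*x) + w * (c*y)) := by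
      have he : (u * (a*x) + v * (c*y)) * (v * (b*x) + w * (d*y))
          - (v * (a*x) + w * (c*y)) * (v * (a*x) + w * (c*y))
          = (a*d - b*c) * (x*y) * (u*w - v^2) := by
        linear_combination (v * (a*x) + w * (c*y)) * hsym
      rw [he]
      rcases eq_or_lt_of_le hx with h0x | h0x
      · rw [← h0x]
        simp
      · rcases eq_or_lt_of_le hy with h0y | h0y
        · rw [← h0y]
          simp
        · have hdetv := det_pos ha hb hc hd habcd hn h0x h0y
          have : 0 < a*d - b*c := by linarith
          positivity
    rw [hS]
    exact posSemidef_two h00 h11 hdet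
end

section
/- For every 1 ≤ j ≤ n, the coefficient a_{j,n} satisfies C(n,j)·(c/d)^j ≤ a_{j,n} ≤ C(n,j)·(a/b)^j. -/
/-- Two-sided bounds on the coefficients `a_{j,n}`. -/
theorem ajn_bounds (a b c d : ℝ) (ha : 0 < a) (hb : 0 < b) (hc : 0 < c) (hd : 0 < d)
    (habcd : b * c < a * d) (n : ℕ) (hn : 2 ≤ n) (j : ℕ) (hj1 : 1 ≤ j) (hj2 : j ≤ n) :
    (n.choose j : ℝ) * (c / d) ^ j ≤ ajn a b c d n j ∧
      ajn a b c d n j ≤ (n.choose j : ℝ) * (a / b) ^ j := by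
  have hn2 : (2:ℝ) ≤ (n:ℝ) := by exact_mod_cast hn
  have key : ∀ k ∈ Finset.range j,
      c/d ≤ (a * k + c * ((n : ℝ) - k - 1)) / (b * k + d * ((n : ℝ) - k - 1)) ∧
      (a * k + c * ((n : ℝ) - k - 1)) / (b * k + d * ((n : ℝ) - k - 1)) ≤ a/b := by
    intro k hk
    simp only [Finset.mem_range] at hk
    have hk0 : (0:ℝ) ≤ (k:ℝ) := Nat.cast_nonneg k
    have hm : (0:ℝ) ≤ (n:ℝ) - k - 1 := by
      have : (k:ℝ) + 1 ≤ n := by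
        exact_mod_cast Nat.succ_le_of_lt (lt_of_lt_of_le hk hj2)
      linarith
    have hden : 0 < b * k + d * ((n : ℝ) - k - 1) := by
      rcases Nat.eq_zero_or_pos k with h0 | hpos
      · subst h0; simp only [Nat.cast_zero]; nlinarith
      · have h1 : (1:ℝ) ≤ (k:ℝ) := by exact_mod_cast hpos
        nlinarith
    constructor
    · rw [div_le_div_iff₀ hd hden]
      nlinarith [mul_nonneg (sub_pos.mpr habcd).le hk0]
    · rw [div_le_div_iff₀ hden hb]
      nlinarith [mul_nonneg (sub_pos.mpr habcd).le hm]
  have hpos : ∀ k ∈ Finset.range j,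
      (0:ℝ) ≤ (a * k + c * ((n : ℝ) - k - 1)) / (b * k + d * ((n : ℝ) - k - 1)) := by
    intro k hk
    have h := (key k hk).1
    have : (0:ℝ) < c/d := div_pos hc hd
    linarith
  have hcd : (0:ℝ) ≤ c/d := (div_pos hc hd).le
  have hch : (0:ℝ) ≤ (n.choose j : ℝ) := Nat.cast_nonneg _
  unfold ajn
  constructor
  · refine mul_le_mul_of_nonneg_left ?_ hch
    calc (c/d)^j = ∏ _k ∈ Finset.range j, (c/d) := by
          rw [Finset.prod_const, Finset.card_range]
      _ ≤ _ := Finset.prod_le_prod (fun k _ => hcd) (fun k hk => (key k hk).1)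
  · refine mul_le_mul_of_nonneg_left ?_ hch
    calc _ ≤ ∏ _k ∈ Finset.range j, (a/b) :=
          Finset.prod_le_prod hpos (fun k hk => (key k hk).2)
      _ = (a/b)^j := by rw [Finset.prod_const, Finset.card_range]
end

section
/- For every X = (X₁, X₂) ∈ [0,∞)², the polynomial Φ_n satisfies the two-sided bound (c·X₁ + d·X₂)^n / d^n ≤ Φ_n(X) ≤ (a·X₁ + b·X₂)^n / b^n. -/
lemma term_bounds (a b c d : ℝ) (hb : 0 < b) (hc : 0 < c) (hd : 0 < d)
    (habcd : b * c < a * d) (n k : ℕ) (hn : 2 ≤ n) (hk : k < n) :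
    c / d ≤ (a * k + c * ((n : ℝ) - k - 1)) / (b * k + d * ((n : ℝ) - k - 1)) ∧
    (a * k + c * ((n : ℝ) - k - 1)) / (b * k + d * ((n : ℝ) - k - 1)) ≤ a / b := by
  have hkn : (k : ℝ) + 1 ≤ n := by exact_mod_cast hk
  have ht : (0 : ℝ) ≤ (n : ℝ) - k - 1 := by linarith
  have hk0 : (0 : ℝ) ≤ (k : ℝ) := Nat.cast_nonneg k
  have hD : 0 < b * k + d * ((n : ℝ) - k - 1) := by
    rcases Nat.eq_zero_or_pos k with h | h
    · subst h
      have h2 : (2 : ℝ) ≤ n := by exact_mod_cast hn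
      push_cast
      nlinarith
    · have h1 : (1 : ℝ) ≤ (k : ℝ) := by exact_mod_cast h
      nlinarith
  constructor
  · rw [div_le_div_iff₀ hd hD]
    nlinarith [mul_le_mul_of_nonneg_right habcd.le hk0]
  · rw [div_le_div_iff₀ hD hb]
    nlinarith [mul_le_mul_of_nonneg_right habcd.le ht]

lemma prod_bounds (a b c d : ℝ) (hb : 0 < b) (hc : 0 < c) (hd : 0 < d)
    (habcd : b * c < a * d) (n j : ℕ) (hn : 2 ≤ n) (hj : j ≤ n) :
    (c / d) ^ j ≤ (∏ k ∈ Finset.range j,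
      (a * k + c * ((n : ℝ) - k - 1)) / (b * k + d * ((n : ℝ) - k - 1))) ∧
    (∏ k ∈ Finset.range j,
      (a * k + c * ((n : ℝ) - k - 1)) / (b * k + d * ((n : ℝ) - k - 1))) ≤ (a / b) ^ j := by
  have hcd : (0 : ℝ) ≤ c / d := div_nonneg hc.le hd.le
  have key : ∀ k ∈ Finset.range j,
      c / d ≤ (a * k + c * ((n : ℝ) - k - 1)) / (b * k + d * ((n : ℝ) - k - 1)) ∧
      (a * k + c * ((n : ℝ) - k - 1)) / (b * k + d * ((n : ℝ) - k - 1)) ≤ a / b := by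
    intro k hkmem
    have hk : k < n := lt_of_lt_of_le (Finset.mem_range.mp hkmem) hj
    exact term_bounds a b c d hb hc hd habcd n k hn hk
  constructor
  · calc (c / d) ^ j = ∏ _k ∈ Finset.range j, (c / d) := by
          rw [Finset.prod_const, Finset.card_range]
      _ ≤ _ := Finset.prod_le_prod (fun k _ => hcd) (fun k hkmem => (key k hkmem).1)
  · calc (∏ k ∈ Finset.range j,
        (a * k + c * ((n : ℝ) - k - 1)) / (b * k + d * ((n : ℝ) - k - 1)))
        ≤ ∏ _k ∈ Finset.range j, (a / b) :=
          Finset.prod_le_prod (fun k hkmem => hcd.trans (key k hkmem).1)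
            (fun k hkmem => (key k hkmem).2)
      _ = (a / b) ^ j := by rw [Finset.prod_const, Finset.card_range]

lemma expand (e x y : ℝ) (n : ℕ) :
    (e * x + y) ^ n = ∑ j ∈ Finset.range (n + 1),
      (n.choose j : ℝ) * e ^ j * x ^ j * y ^ (n - j) := by
  rw [add_pow]
  refine Finset.sum_congr rfl fun j _ => ?_
  rw [mul_pow]
  ring

/-- Two-sided bounds on the polynomial `Φ_n`. -/
theorem Phi_bounds (a b c d : ℝ) (ha : 0 < a) (hb : 0 < b) (hc : 0 < c) (hd : 0 < d)
    (habcd : b * c < a * d) (n : ℕ) (hn : 2 ≤ n) (x y : ℝ) (hx : 0 ≤ x) (hy : 0 ≤ y) :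
    (c * x + d * y) ^ n / d ^ n ≤ Phi a b c d n x y ∧
      Phi a b c d n x y ≤ (a * x + b * y) ^ n / b ^ n := by
  have hL : (c * x + d * y) ^ n / d ^ n = ∑ j ∈ Finset.range (n + 1),
      (n.choose j : ℝ) * (c / d) ^ j * x ^ j * y ^ (n - j) := by
    rw [← expand (c / d) x y n, ← div_pow]
    congr 1
    field_simp
  have hR : (a * x + b * y) ^ n / b ^ n = ∑ j ∈ Finset.range (n + 1),
      (n.choose j : ℝ) * (a / b) ^ j * x ^ j * y ^ (n - j) := by
    rw [← expand (a / b) x y n, ← div_pow]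
    congr 1
    field_simp
  unfold Phi ajn
  constructor
  · rw [hL]
    refine Finset.sum_le_sum fun j hj => ?_
    have hjn : j ≤ n := Nat.lt_succ_iff.mp (Finset.mem_range.mp hj)
    have hpb := (prod_bounds a b c d hb hc hd habcd n j hn hjn).1
    have hnn : (0 : ℝ) ≤ (n.choose j : ℝ) * x ^ j * y ^ (n - j) := by positivity
    calc (n.choose j : ℝ) * (c / d) ^ j * x ^ j * y ^ (n - j)
        = (c / d) ^ j * ((n.choose j : ℝ) * x ^ j * y ^ (n - j)) := by ring
      _ ≤ (∏ k ∈ Finset.range j,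
            (a * k + c * ((n : ℝ) - k - 1)) / (b * k + d * ((n : ℝ) - k - 1))) *
            ((n.choose j : ℝ) * x ^ j * y ^ (n - j)) :=
          mul_le_mul_of_nonneg_right hpb hnn
      _ = (n.choose j : ℝ) * (∏ k ∈ Finset.range j,
            (a * k + c * ((n : ℝ) - k - 1)) / (b * k + d * ((n : ℝ) - k - 1))) *
            x ^ j * y ^ (n - j) := by ring
  · rw [hR]
    refine Finset.sum_le_sum fun j hj => ?_
    have hjn : j ≤ n := Nat.lt_succ_iff.mp (Finset.mem_range.mp hj)
    have hpb := (prod_bounds a b c d hb hc hd habcd n j hn hjn).2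
    have hnn : (0 : ℝ) ≤ (n.choose j : ℝ) * x ^ j * y ^ (n - j) := by positivity
    calc (n.choose j : ℝ) * (∏ k ∈ Finset.range j,
            (a * k + c * ((n : ℝ) - k - 1)) / (b * k + d * ((n : ℝ) - k - 1))) *
            x ^ j * y ^ (n - j)
        = (∏ k ∈ Finset.range j,
            (a * k + c * ((n : ℝ) - k - 1)) / (b * k + d * ((n : ℝ) - k - 1))) *
            ((n.choose j : ℝ) * x ^ j * y ^ (n - j)) := by ring
      _ ≤ (a / b) ^ j * ((n.choose j : ℝ) * x ^ j * y ^ (n - j)) :=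
          mul_le_mul_of_nonneg_right hpb hnn
      _ = (n.choose j : ℝ) * (a / b) ^ j * x ^ j * y ^ (n - j) := by ring
end

section
/- Let S be the symmetric matrix with rows (a·c, b·c) and (b·c, b·d), and for ρ > 1 let M^ρ(X) be the matrix with rows (a·α_ρ(X₁), b·α_ρ(X₁)) and (c·α_ρ(X₂), d·α_ρ(X₂)). Then for every X ∈ ℝ², the matrix S·M^ρ(X) is symmetric and positive semidefinite, with det(S·M^ρ(X)) = b·c·(a·d−b·c)²·α_ρ(X₁)·α_ρ(X₂). -/
/-- The cutoff function `α_ρ`. -/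
noncomputable def alphaCut (ρ : ℝ) (z : ℝ) : ℝ :=
  if z ≤ 0 then 0
  else if z ≤ ρ - 1 then z
  else if z ≤ ρ then (ρ - 1) * (ρ - z)
  else 0

/-- The truncated mobility matrix `M^ρ(X)`. -/
noncomputable def Mrho (a b c d ρ x y : ℝ) : Matrix (Fin 2) (Fin 2) ℝ :=
  !![a * alphaCut ρ x, b * alphaCut ρ x; c * alphaCut ρ y, d * alphaCut ρ y]

lemma alphaCut_nonneg (ρ : ℝ) (hρ : 1 < ρ) (z : ℝ) : 0 ≤ alphaCut ρ z := by
  unfold alphaCut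
  split_ifs with h1 h2 h3 <;> nlinarith

/-- `S·M^ρ(X)` is symmetric positive semidefinite with an explicit determinant. -/
theorem SMrho_posSemidef (a b c d : ℝ) (ha : 0 < a) (hb : 0 < b) (hc : 0 < c)
    (hd : 0 < d) (habcd : b * c < a * d) (ρ : ℝ) (hρ : 1 < ρ) (x y : ℝ) :
    ((!![a * c, b * c; b * c, b * d] : Matrix (Fin 2) (Fin 2) ℝ) *
        Mrho a b c d ρ x y).IsSymm ∧
      ((!![a * c, b * c; b * c, b * d] : Matrix (Fin 2) (Fin 2) ℝ) *
        Mrho a b c d ρ x y).PosSemidef ∧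
      ((!![a * c, b * c; b * c, b * d] : Matrix (Fin 2) (Fin 2) ℝ) *
          Mrho a b c d ρ x y).det =
        b * c * (a * d - b * c) ^ 2 * alphaCut ρ x * alphaCut ρ y := by
  have hαx := alphaCut_nonneg ρ hρ x
  have hαy := alphaCut_nonneg ρ hρ y
  set u := alphaCut ρ x with hu
  set v := alphaCut ρ y with hv
  have hP : (!![a * c, b * c; b * c, b * d] : Matrix (Fin 2) (Fin 2) ℝ) *
      Mrho a b c d ρ x y =
      !![a * a * c * u + b * c * c * v, a * b * c * u + b * c * d * v;
         a * b * c * u + b * c * d * v, b * b * c * u + b * d * d * v] := by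
    rw [Mrho]
    ext i j
    fin_cases i <;> fin_cases j <;>
      simp [Matrix.mul_apply, Fin.sum_univ_two] <;> ring
  rw [hP]
  refine ⟨?_, ?_, ?_⟩
  · rw [Matrix.IsSymm]
    ext i j
    fin_cases i <;> fin_cases j <;> simp
  · constructor
    · rw [Matrix.IsHermitian]
      ext i j
      fin_cases i <;> fin_cases j <;> simp
    · intro w
      simp [Finsupp.sum_fintype, Fin.sum_univ_two]
      nlinarith [mul_nonneg (mul_nonneg hc.le hαx) (sq_nonneg (a * w 0 + b * w 1)),
        mul_nonneg (mul_nonneg hb.le hαy) (sq_nonneg (c * w 0 + d * w 1))]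
  · rw [Matrix.det_fin_two_of]
    ring
end
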